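/- arXiv:1604.04609 — 3 statements merged into one kernel-verified Lean document; each statement's English description precedes it below -/
import Mathlib

section
/- Let X be a separable metrizable space. Then C_ph(X) is separable if and only if X has a countable π-network consisting of 𝓘-sets. -/
open TopologicalSpace Set Topology

/-- The point-open topology `p` on `C(X, ℝ)`. -/
def pointOpenTopology (X : Type*) [TopologicalSpace X] : TopologicalSpace C(X, ℝ) :=
  generateFrom {S | ∃ (x : X) (U : Set ℝ), IsOpen U ∧ S = {f : C(X, ℝ) | f x ∈ U}}

/-- The open-point topology `h` on `C(X, ℝ)`. -/
def openPointTopology (X : Type*) [TopologicalSpace X] : TopologicalSpace C(X, ℝ) :=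
  generateFrom {S | ∃ (V : Set X) (r : ℝ), IsOpen V ∧ S = {f : C(X, ℝ) | ∃ x ∈ V, f x = r}}

/-- The bi-point-open topology `ph` on `C(X, ℝ)`: generated by both kinds of subbasic sets. -/
def biPointOpenTopology (X : Type*) [TopologicalSpace X] : TopologicalSpace C(X, ℝ) :=
  generateFrom
    ({S | ∃ (x : X) (U : Set ℝ), IsOpen U ∧ S = {f : C(X, ℝ) | f x ∈ U}} ∪
     {S | ∃ (V : Set X) (r : ℝ), IsOpen V ∧ S = {f : C(X, ℝ) | ∃ x ∈ V, f x = r}})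

/-- The dispersion character: minimum cardinality of a nonempty open subset. -/
noncomputable def dispersionCharacter (X : Type*) [TopologicalSpace X] : Cardinal :=
  sInf {c | ∃ U : Set X, IsOpen U ∧ U.Nonempty ∧ c = Cardinal.mk U}

/-- A π-network: a family of nonempty subsets such that every nonempty open set contains one. -/
def IsPiNetwork {X : Type*} [TopologicalSpace X] (γ : Set (Set X)) : Prop :=
  (∀ A ∈ γ, A.Nonempty) ∧ ∀ U : Set X, IsOpen U → U.Nonempty → ∃ A ∈ γ, A ⊆ U

/-- A π-base: a family of nonempty open subsets such that every nonempty open set contains one. -/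
def IsPiBase {X : Type*} [TopologicalSpace X] (γ : Set (Set X)) : Prop :=
  (∀ A ∈ γ, IsOpen A ∧ A.Nonempty) ∧ ∀ U : Set X, IsOpen U → U.Nonempty → ∃ A ∈ γ, A ⊆ U

/-- A network. -/
def IsNetwork {X : Type*} [TopologicalSpace X] (𝒩 : Set (Set X)) : Prop :=
  ∀ (x : X) (U : Set X), IsOpen U → x ∈ U → ∃ N ∈ 𝒩, x ∈ N ∧ N ⊆ U

/-- An 𝓘-set. -/
def IsISet {X : Type*} [TopologicalSpace X] (A : Set X) : Prop :=
  ∃ (f : X → ℝ) (a b : ℝ), Continuous f ∧ a < b ∧ Icc a b ⊆ f '' A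

/-- A T₀-separating family. -/
def T0Separating {X : Type*} (γ : Set (Set X)) : Prop :=
  ∀ x y : X, x ≠ y → ∃ V ∈ γ, (x ∈ V ∧ y ∉ V) ∨ (y ∈ V ∧ x ∉ V)

/-- A zero-set. -/
def IsZeroSet {X : Type*} [TopologicalSpace X] (Z : Set X) : Prop :=
  ∃ f : X → ℝ, Continuous f ∧ Z = f ⁻¹' {0}

/-- Separable submetrizable: admits a coarser separable metrizable topology. -/
def SeparableSubmetrizable (X : Type*) [t : TopologicalSpace X] : Prop :=
  ∃ t' : TopologicalSpace X, (∀ U : Set X, IsOpen[t'] U → IsOpen[t] U) ∧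
    @SeparableSpace X t' ∧ @MetrizableSpace X t'

/-- Hypothesis (M). -/
def HypothesisM : Prop :=
  ∀ A : Set ℝ, Cardinal.mk A = Cardinal.continuum →
    ∃ f : A → ℝ, Continuous f ∧ Set.range f = Icc (0 : ℝ) 1

open Function Filter

section Binary

/-- binary expansion: every `t ∈ [0,1]` is a sum of `x i * 2^{-(i+1)}`. -/
lemma exists_hasSum_binary (t : ℝ) (h0 : 0 ≤ t) (h1 : t ≤ 1) :
    ∃ x : ℕ → Bool, HasSum (fun i => if x i then ((1:ℝ)/2)^(i+1) else 0) t := by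
  rcases eq_or_lt_of_le h1 with rfl | h1
  · refine ⟨fun _ => true, ?_⟩
    have h := hasSum_geometric_two.mul_right (1/2 : ℝ)
    norm_num at h
    simpa [pow_succ] using h
  · -- t < 1
    set c : ℕ → ℝ := fun n => (⌊t * 2^n⌋ : ℝ) / 2^n with hc
    set d : ℕ → ℤ := fun i => ⌊t * 2^(i+1)⌋ - 2 * ⌊t * 2^i⌋ with hd
    have hd01 : ∀ i, d i = 0 ∨ d i = 1 := by
      intro i
      have hlow : (⌊t * 2^i⌋ : ℝ) ≤ t * 2^i := Int.floor_le _
      have hhigh : t * 2^i < ⌊t * 2^i⌋ + 1 := Int.lt_floor_add_one _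
      have l1 : 2 * ⌊t * 2^i⌋ ≤ ⌊t * 2^(i+1)⌋ := by
        apply Int.le_floor.2; push_cast; rw [pow_succ]; nlinarith
      have l2 : ⌊t * 2^(i+1)⌋ < 2 * ⌊t * 2^i⌋ + 2 := by
        apply Int.floor_lt.2; push_cast; rw [pow_succ]; nlinarith
      have : d i = ⌊t * 2^(i+1)⌋ - 2 * ⌊t * 2^i⌋ := rfl
      omega
    refine ⟨fun i => decide (d i = 1), ?_⟩
    have hterm : ∀ i, (if decide (d i = 1) = true then ((1:ℝ)/2)^(i+1) else 0)
        = (d i : ℝ) / 2^(i+1) := by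
      intro i
      rcases hd01 i with h | h <;> simp [h, div_pow]
    have hnonneg : ∀ i, (0:ℝ) ≤ (if decide (d i = 1) = true then ((1:ℝ)/2)^(i+1) else 0) := by
      intro i; split <;> positivity
    rw [hasSum_iff_tendsto_nat_of_nonneg hnonneg]
    have hpart : ∀ n, (∑ i ∈ Finset.range n,
        (if decide (d i = 1) = true then ((1:ℝ)/2)^(i+1) else 0)) = c n := by
      intro n
      have hstep : ∀ i, (if decide (d i = 1) = true then ((1:ℝ)/2)^(i+1) else 0)
          = c (i+1) - c i := by
        intro i
        rw [hterm i]
        have h2 : (2:ℝ)^i ≠ 0 := by positivity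
        have h2' : (2:ℝ)^(i+1) ≠ 0 := by positivity
        rw [hc]
        simp only [hd]
        field_simp
        push_cast
        ring
      rw [Finset.sum_congr rfl (fun i _ => hstep i), Finset.sum_range_sub]
      have hfl0 : ⌊t⌋ = 0 := by
        refine Int.floor_eq_zero_iff.2 ?_
        rw [Set.mem_Ico]; exact ⟨h0, h1⟩
      rw [hc]
      norm_num [hfl0]
    simp only [hpart]
    -- c n → t
    have key : Tendsto c atTop (𝓝 t) := by
      have hb : ∀ n : ℕ, ‖c n - t‖ ≤ (1/2)^n := by
        intro n
        have hlow : (⌊t * 2^n⌋ : ℝ) ≤ t * 2^n := Int.floor_le _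
        have hhigh : t * 2^n < ⌊t * 2^n⌋ + 1 := Int.lt_floor_add_one _
        have h2 : (0:ℝ) < 2^n := by positivity
        have key1 : c n - t = ((⌊t * 2^n⌋ : ℝ) - t * 2^n)/2^n := by
          rw [hc]; field_simp
        rw [Real.norm_eq_abs, key1, div_pow, one_pow, abs_div, abs_of_pos h2]
        gcongr
        rw [abs_le]
        constructor <;> linarith
      have h0' : Tendsto (fun n : ℕ => ((1:ℝ)/2)^n) atTop (𝓝 0) := by
        apply tendsto_pow_atTop_nhds_zero_of_lt_one <;> norm_num
      have h' : Tendsto (fun n => c n - t) atTop (𝓝 0) := squeeze_zero_norm hb h0'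
      have h'' := h'.add (tendsto_const_nhds : Filter.Tendsto (fun _ : ℕ => t) atTop (𝓝 t))
      simpa using h''
    exact key

end Binary

section CantorSmall

def interA (e : ℕ → Bool) (z : ℕ → Bool) : ℕ → Bool :=
  fun i => if Even i then e (i/2) else z (i/2)

lemma continuous_interA (e : ℕ → Bool) : Continuous (interA e) := by
  apply continuous_pi
  intro i
  by_cases h : Even i
  · simp only [interA, if_pos h]; exact continuous_const
  · simp only [interA, if_neg h]; exact continuous_apply _

lemma injective_interA (e : ℕ → Bool) : Function.Injective (interA e) := by
  intro z z' h
  funext i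
  have h2 : ¬ Even (2*i+1) := by simp [Nat.even_add_one, parity_simps]
  have h3 : (2*i+1)/2 = i := by omega
  have := congrFun h (2*i+1)
  simpa [interA, h2, h3] using this

noncomputable def gfun : (ℕ → Bool) → ℝ :=
  fun x => ∑' i, if x (2*i) then ((1:ℝ)/2)^(i+1) else 0

lemma continuous_gfun : Continuous gfun := by
  apply continuous_tsum (u := fun i => ((1:ℝ)/2)^(i+1))
  · intro i
    have hb : Continuous (fun b : Bool => if b then ((1:ℝ)/2)^(i+1) else 0) :=
      continuous_of_discreteTopology
    exact hb.comp (continuous_apply (2*i))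
  · simpa [pow_succ] using (summable_geometric_two).mul_right (1/2 : ℝ)
  · intro n x
    rw [Real.norm_eq_abs]
    split
    · rw [abs_of_nonneg (by positivity)]
    · rw [abs_zero]; positivity

lemma gfun_interA (e z : ℕ → Bool) :
    gfun (interA e z) = ∑' i, if e i then ((1:ℝ)/2)^(i+1) else 0 := by
  unfold gfun
  congr 1
  funext i
  have h1 : Even (2*i) := ⟨i, two_mul i⟩
  have h2 : (2*i)/2 = i := by omega
  simp [interA, h1, h2]

def SmallSet (E : Set ℝ) : Prop :=
  ∀ F : (ℕ → Bool) → ℝ, Continuous F → Function.Injective F →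
    ∃ F' : (ℕ → Bool) → ℝ, Continuous F' ∧ Function.Injective F' ∧
      range F' ⊆ range F ∧ range F' ∩ E = ∅

lemma perfect_univ_real : Perfect (univ : Set ℝ) := by
  refine ⟨isClosed_univ, preperfect_iff_nhds.2 (fun x _ U hU => ?_)⟩
  obtain ⟨ε, hε, hball⟩ := Metric.mem_nhds_iff.1 hU
  refine ⟨x + ε/2, ⟨hball ?_, trivial⟩, by simp; positivity⟩
  simp [Metric.mem_ball, dist_eq_norm]
  rw [abs_of_pos (by positivity)]
  linarith

lemma exists_avoid {E : ℕ → Set ℝ} (h : ∀ n, SmallSet (E n)) : ∃ r : ℝ, ∀ n, r ∉ E n := by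
  obtain ⟨F0, -, hF0c, hF0i⟩ := perfect_univ_real.exists_nat_bool_injection univ_nonempty
  let T := {F : (ℕ → Bool) → ℝ // Continuous F ∧ Function.Injective F}
  let step : ℕ → T → T := fun n F =>
    ⟨(h n F.1 F.2.1 F.2.2).choose, (h n F.1 F.2.1 F.2.2).choose_spec.1,
      (h n F.1 F.2.1 F.2.2).choose_spec.2.1⟩
  let seq : ℕ → T := fun n => Nat.rec ⟨F0, hF0c, hF0i⟩ step n
  have hseq : ∀ n, seq (n+1) = step n (seq n) := fun n => rfl
  have hsub : ∀ n, range (seq (n+1)).1 ⊆ range (seq n).1 := by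
    intro n
    rw [hseq n]
    exact (h n (seq n).1 (seq n).2.1 (seq n).2.2).choose_spec.2.2.1
  have hdisj : ∀ n, range (seq (n+1)).1 ∩ E n = ∅ := by
    intro n
    rw [hseq n]
    exact (h n (seq n).1 (seq n).2.1 (seq n).2.2).choose_spec.2.2.2
  have hcompact : ∀ n, IsCompact (range (seq n).1) := fun n => isCompact_range (seq n).2.1
  obtain ⟨r, hr⟩ := IsCompact.nonempty_iInter_of_sequence_nonempty_isCompact_isClosed
      (fun n => range (seq n).1) hsub (fun n => range_nonempty _) (hcompact 0)
      (fun n => (hcompact n).isClosed)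
  refine ⟨r, fun n hrE => ?_⟩
  have hmem : r ∈ range (seq (n+1)).1 := mem_iInter.1 hr (n+1)
  have : r ∈ range (seq (n+1)).1 ∩ E n := ⟨hmem, hrE⟩
  rw [hdisj n] at this
  exact this

lemma not_small {E : Set ℝ} (h : ¬ SmallSet E) :
    ∃ ψ : C(ℝ, ℝ), ∀ t ∈ Icc (0:ℝ) 1, t ∈ ψ '' E := by
  unfold SmallSet at h
  push_neg at h
  obtain ⟨F, hFc, hFi, hkill⟩ := h
  have hemb : IsClosedEmbedding F := hFc.isClosedEmbedding hFi
  obtain ⟨ψ, hψ⟩ := ContinuousMap.exists_extension' hemb ⟨gfun, continuous_gfun⟩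
  refine ⟨ψ, fun t ht => ?_⟩
  obtain ⟨e, he⟩ := exists_hasSum_binary t ht.1 ht.2
  have hF' := hkill (F ∘ interA e) (hFc.comp (continuous_interA e))
    (hFi.comp (injective_interA e)) (by rw [range_comp]; exact image_subset_range _ _)
  obtain ⟨y, hyR, hyE⟩ := hF'
  obtain ⟨z, rfl⟩ := hyR
  refine ⟨F (interA e z), hyE, ?_⟩
  have h1 : ψ (F (interA e z)) = gfun (interA e z) := congrFun hψ (interA e z)
  rw [h1, gfun_interA, he.tsum_eq]

end CantorSmall

section Necessity

variable {X : Type*} [TopologicalSpace X]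

lemma isISet_of_cover {U : Set X} (S : Set C(X, ℝ)) (hS : S.Countable)
    (hcov : ∀ r : ℝ, ∃ f ∈ S, r ∈ (f : X → ℝ) '' U) : IsISet U := by
  have hne : S.Nonempty := by obtain ⟨f, hf, -⟩ := hcov 0; exact ⟨f, hf⟩
  obtain ⟨e, he⟩ := hS.exists_eq_range hne
  by_cases hall : ∀ n, SmallSet ((e n : X → ℝ) '' U)
  · obtain ⟨r, hr⟩ := exists_avoid hall
    obtain ⟨f, hfS, hrf⟩ := hcov r
    rw [he] at hfS
    obtain ⟨n, rfl⟩ := hfS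
    exact absurd hrf (hr n)
  · push_neg at hall
    obtain ⟨n, hn⟩ := hall
    obtain ⟨ψ, hψ⟩ := not_small hn
    refine ⟨fun x => ψ ((e n) x), 0, 1, ψ.continuous.comp (e n).continuous, one_pos, ?_⟩
    intro t ht
    obtain ⟨y, ⟨x, hxU, rfl⟩, hty⟩ := hψ t ht
    exact ⟨x, hxU, hty⟩

/-- Necessity: if `C_ph(X)` is separable then every nonempty open subset of a second
countable space is an 𝓘-set, and the nonempty members of a countable basis form a
π-network of 𝓘-sets. -/
lemma necessity [SecondCountableTopology X]
    (hsep : @SeparableSpace C(X, ℝ) (biPointOpenTopology X)) :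
    ∃ γ : Set (Set X), γ.Countable ∧ IsPiNetwork γ ∧ ∀ A ∈ γ, IsISet A := by
  obtain ⟨b, hbc, hbne, hbasis⟩ := exists_countable_basis X
  letI tph : TopologicalSpace C(X, ℝ) := biPointOpenTopology X
  obtain ⟨S, hSc, hSd⟩ := @TopologicalSpace.exists_countable_dense _ (biPointOpenTopology X) hsep
  have hIopen : ∀ B ∈ b, IsISet B := by
    intro B hB
    have hBop : IsOpen B := hbasis.isOpen hB
    have hBne : B.Nonempty := Set.nonempty_iff_ne_empty.2 (fun hE => hbne (hE ▸ hB))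
    refine isISet_of_cover S hSc (fun r => ?_)
    set H : Set C(X, ℝ) := {f : C(X, ℝ) | ∃ x ∈ B, f x = r} with hH
    have hHopen : IsOpen[biPointOpenTopology X] H :=
      isOpen_generateFrom_of_mem (Or.inr ⟨B, r, hBop, rfl⟩)
    have hHne : H.Nonempty := by
      obtain ⟨x, hx⟩ := hBne
      exact ⟨ContinuousMap.const X r, x, hx, rfl⟩
    obtain ⟨f, hfH, hfS⟩ := dense_iff_inter_open.1 hSd H hHopen hHne
    obtain ⟨x, hxB, hfx⟩ := hfH
    exact ⟨f, hfS, x, hxB, hfx⟩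
  refine ⟨b, hbc, ⟨?_, ?_⟩, hIopen⟩
  · intro B hB
    exact Set.nonempty_iff_ne_empty.2 (fun hE => hbne (hE ▸ hB))
  · intro U hU hUne
    obtain ⟨x, hx⟩ := hUne
    obtain ⟨B, hBb, hxB, hBU⟩ := hbasis.exists_subset_of_mem_open hx hU
    exact ⟨B, hBb, hBU⟩

end Necessity

section SufficiencyTools

variable {X : Type*} [TopologicalSpace X]

/-- blend a base function with a list of (bump, target) pairs -/
noncomputable def blend (d : C(X, ℝ)) (l : List (C(X, ℝ) × C(X, ℝ))) : C(X, ℝ) :=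
  l.foldl (fun g p => (1 - p.1) * g + p.1 * p.2) d

lemma blend_apply_zero (d : C(X, ℝ)) (l : List (C(X, ℝ) × C(X, ℝ))) (x : X)
    (h : ∀ p ∈ l, p.1 x = 0) : blend d l x = d x := by
  induction l generalizing d with
  | nil => rfl
  | cons p l ih =>
    have hp : p.1 x = 0 := h p List.mem_cons_self
    have : blend d (p :: l) = blend ((1 - p.1) * d + p.1 * p.2) l := rfl
    rw [this, ih _ (fun q hq => h q (List.mem_cons_of_mem _ hq))]
    simp [hp]

lemma blend_apply_one (d : C(X, ℝ)) (l₁ l₂ : List (C(X, ℝ) × C(X, ℝ)))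
    (u k : C(X, ℝ)) (x : X) (hu : u x = 1) (h₂ : ∀ p ∈ l₂, p.1 x = 0) :
    blend d (l₁ ++ (u, k) :: l₂) x = k x := by
  have h1 : blend d (l₁ ++ (u, k) :: l₂) = blend (blend d l₁) ((u, k) :: l₂) := by
    unfold blend
    rw [List.foldl_append]
  have h2 : blend (blend d l₁) ((u, k) :: l₂)
      = blend ((1 - u) * (blend d l₁) + u * k) l₂ := rfl
  rw [h1, h2, blend_apply_zero _ _ _ h₂]
  simp [hu]

/-- the clamped affine map sending `[a,c]` onto `[-M, M]` -/
noncomputable def clampAff (a c : ℝ) (M : ℕ) : ℝ → ℝ :=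
  fun t => -(M:ℝ) + 2*M * (min 1 (max 0 ((t - a)/(c - a))))

lemma continuous_clampAff (a c : ℝ) (M : ℕ) : Continuous (clampAff a c M) := by
  unfold clampAff
  fun_prop

lemma clampAff_surj {a c : ℝ} (h : a < c) (M : ℕ) (hM : 0 < M) {v : ℝ}
    (hv : |v| ≤ M) : ∃ t ∈ Icc a c, clampAff a c M t = v := by
  have hM' : (0:ℝ) < M := by exact_mod_cast hM
  have hca : c - a ≠ 0 := by linarith [h]
  have hv1 : -(M:ℝ) ≤ v := (abs_le.1 hv).1
  have hv2 : v ≤ (M:ℝ) := (abs_le.1 hv).2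
  set ρ : ℝ := (v + M) / (2*M) with hρ
  have hρ0 : 0 ≤ ρ := div_nonneg (by linarith) (by positivity)
  have hρ1 : ρ ≤ 1 := by rw [div_le_one (by positivity)]; linarith
  refine ⟨a + (c - a) * ρ, ⟨by nlinarith, by nlinarith⟩, ?_⟩
  unfold clampAff
  have h1 : (a + (c - a) * ρ - a)/(c - a) = ρ := by field_simp; ring
  have h2 : 2*(M:ℝ) * ρ = v + M := by rw [hρ]; field_simp
  rw [h1, max_eq_right hρ0, min_eq_right hρ1]
  linarith

/-- Urysohn function for a pair of sets, with junk value otherwise -/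
lemma ury_exists {Y : Type*} [MetricSpace Y] (P Q : Set Y) :
    ∃ u : C(Y, ℝ), (∀ x, u x ∈ Icc (0:ℝ) 1) ∧
      (closure P ⊆ Q → IsOpen Q → (EqOn u 1 (closure P) ∧ EqOn u 0 Qᶜ)) := by
  by_cases h : closure P ⊆ Q ∧ IsOpen Q
  · have hd : Disjoint (Qᶜ) (closure P) := by
      rw [Set.disjoint_left]
      intro x hx hxP
      exact hx (h.1 hxP)
    obtain ⟨f, hf0, hf1, hf01⟩ := exists_continuous_zero_one_of_isClosed
      (isClosed_compl_iff.2 h.2) isClosed_closure hd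
    exact ⟨f, hf01, fun _ _ => ⟨hf1, hf0⟩⟩
  · refine ⟨ContinuousMap.const Y 0, fun x => ?_, fun h1 h2 => absurd ⟨h1, h2⟩ h⟩
    simp [Set.mem_Icc]

lemma countable_lists {α : Type*} {s : Set α} (hs : s.Countable) :
    {l : List α | ∀ x ∈ l, x ∈ s}.Countable := by
  haveI := hs.to_subtype
  have hsub : {l : List α | ∀ x ∈ l, x ∈ s} ⊆
      range (fun L : List s => L.map Subtype.val) := by
    intro l hl
    refine ⟨l.attach.map (fun x => (⟨x.1, hl x.1 x.2⟩ : s)), ?_⟩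
    simp [List.map_map]
  exact (countable_range _).mono hsub

lemma coe_list_sum {Y : Type*} [TopologicalSpace Y] (L : List C(Y, ℝ)) (x : Y) :
    (L.sum : C(Y, ℝ)) x = (L.map (fun f => f x)).sum := by
  induction L with
  | nil => simp
  | cons f L ih => simp [List.sum_cons, ih]

lemma list_sum_single {α : Type*} (L : List α) (g : α → ℝ) (a₀ : α)
    (h₀ : a₀ ∈ L) (hnd : L.Nodup) (hz : ∀ a ∈ L, a ≠ a₀ → g a = 0) :
    (L.map g).sum = g a₀ := by
  induction L with
  | nil => simp at h₀
  | cons a L ih =>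
    rcases List.mem_cons.1 h₀ with rfl | h₀'
    · have : ∀ b ∈ L, g b = 0 := by
        intro b hb
        exact hz b (List.mem_cons_of_mem _ hb) (fun hba => ((List.nodup_cons.1 hnd).1 (by rwa [hba] at hb)))
      simp only [List.map_cons, List.sum_cons]
      have : (L.map g).sum = 0 := by
        apply List.sum_eq_zero
        intro y hy
        obtain ⟨b, hb, rfl⟩ := List.mem_map.1 hy
        exact this b hb
      rw [this, add_zero]
    · have ha : a ≠ a₀ := fun hh => ((List.nodup_cons.1 hnd).1 (by rwa [← hh] at h₀'))
      simp only [List.map_cons, List.sum_cons]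
      rw [hz a List.mem_cons_self ha, zero_add,
        ih h₀' (List.nodup_cons.1 hnd).2 (fun b hb => hz b (List.mem_cons_of_mem _ hb))]

/-- choose distinct points in infinitely large sets -/
lemma exists_inj_choice {α Y : Type*} [Nonempty Y] (t : Finset α) (W : α → Set Y)
    (hW : ∀ a ∈ t, (W a).Infinite) :
    ∃ z : α → Y, (∀ a ∈ t, z a ∈ W a) ∧ Set.InjOn z t := by
  classical
  induction t using Finset.induction with
  | empty => exact ⟨fun _ => Classical.arbitrary Y, by simp, by simp [Set.InjOn]⟩
  | @insert a t ha ih =>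
    obtain ⟨z, hz, hzinj⟩ := ih (fun b hb => hW b (Finset.mem_insert_of_mem hb))
    have hWa : (W a).Infinite := hW a (Finset.mem_insert_self a t)
    have : (W a \ (t.image z : Finset Y)).Nonempty :=
      Set.Infinite.nonempty (hWa.diff (Set.Finite.ofFinset _ (fun x => Iff.rfl)))
    obtain ⟨za, hza⟩ := this
    refine ⟨Function.update z a za, ?_, ?_⟩
    · intro b hb
      rcases Finset.mem_insert.1 hb with rfl | hb'
      · rw [Function.update_self]; exact hza.1
      · rw [Function.update_of_ne (fun hba => ha (by rwa [hba] at hb')) ]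
        exact hz b hb'
    · intro b hb c hc hbc
      simp only [Finset.coe_insert, Set.mem_insert_iff] at hb hc
      rcases hb with rfl | hb' <;> rcases hc with rfl | hc'
      · rfl
      · exfalso
        rw [Function.update_self, Function.update_of_ne (fun h => ha (by rwa [h] at hc'))] at hbc
        exact hza.2 (by simp only [Finset.coe_image, Finset.mem_coe, Finset.mem_image]; exact ⟨c, hc', hbc.symm⟩)
      · exfalso
        rw [Function.update_self, Function.update_of_ne (fun h => ha (by rwa [h] at hb'))] at hbc
        exact hza.2 (by simp only [Finset.coe_image, Finset.mem_coe, Finset.mem_image]; exact ⟨b, hb', hbc⟩)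
      · exact hzinj hb' hc' (by rwa [Function.update_of_ne (fun h => ha (by rwa [h] at hb')),
          Function.update_of_ne (fun h => ha (by rwa [h] at hc'))] at hbc)

/-- pairwise disjoint balls around finitely many points -/
lemma exists_disjoint_balls {Y : Type*} [MetricSpace Y] (s : Finset Y) :
    ∃ ε : Y → ℝ, (∀ x, 0 < ε x) ∧ ∀ x ∈ s, ∀ y ∈ s, x ≠ y →
      Disjoint (Metric.ball x (ε x)) (Metric.ball y (ε y)) := by
  classical
  refine ⟨fun x => if h : ((s.erase x).Nonempty) then ((s.erase x).inf' h (dist x ·))/3 else 1,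
    ?_, ?_⟩
  · intro x
    simp only
    split
    · rename_i h
      have : ∀ b ∈ s.erase x, 0 < dist x b := fun b hb =>
        dist_pos.2 (fun hxb => (Finset.mem_erase.1 hb).1 hxb.symm)
      have := (Finset.lt_inf'_iff h (a := 0)).2 this
      linarith
    · norm_num
  · intro x hx y hy hxy
    have hyx : y ∈ s.erase x := Finset.mem_erase.2 ⟨fun h => hxy h.symm, hy⟩
    have hxy' : x ∈ s.erase y := Finset.mem_erase.2 ⟨hxy, hx⟩
    have hex : (s.erase x).Nonempty := ⟨y, hyx⟩
    have hey : (s.erase y).Nonempty := ⟨x, hxy'⟩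
    have hbx : (s.erase x).inf' hex (dist x ·) ≤ dist x y := Finset.inf'_le _ hyx
    have hby : (s.erase y).inf' hey (dist y ·) ≤ dist y x := Finset.inf'_le _ hxy'
    rw [Set.disjoint_left]
    intro z hzx hzy
    simp only [dif_pos hex, dif_pos hey, Metric.mem_ball] at hzx hzy
    have htri : dist x y ≤ dist z x + dist z y := by
      rw [dist_comm z x]
      exact dist_triangle x z y
    rw [dist_comm y x] at hby
    have hpos : 0 < dist x y := dist_pos.2 hxy
    linarith

/-- find a basis pair `P ⊆ closure P ⊆ Q ⊆ O` around a point of an open set -/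
lemma exists_basis_pair {Y : Type*} [MetricSpace Y] {b : Set (Set Y)}
    (hb : IsTopologicalBasis b) {z : Y} {O : Set Y} (hO : IsOpen O) (hz : z ∈ O) :
    ∃ P Q : Set Y, P ∈ b ∧ Q ∈ b ∧ z ∈ P ∧ closure P ⊆ Q ∧ Q ⊆ O := by
  obtain ⟨Q, hQb, hzQ, hQO⟩ := hb.exists_subset_of_mem_open hz hO
  obtain ⟨η, hη, hball⟩ := Metric.isOpen_iff.1 (hb.isOpen hQb) z hzQ
  obtain ⟨P, hPb, hzP, hPball⟩ := hb.exists_subset_of_mem_open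
    (Metric.mem_ball_self (by linarith : (0:ℝ) < η/2)) Metric.isOpen_ball
  refine ⟨P, Q, hPb, hQb, hzP, ?_, hQO⟩
  have h1 : closure P ⊆ closure (Metric.ball z (η/2)) := closure_mono hPball
  have h2 : closure (Metric.ball z (η/2)) ⊆ Metric.closedBall z (η/2) :=
    Metric.closure_ball_subset_closedBall
  have h3 : Metric.closedBall z (η/2) ⊆ Metric.ball z η :=
    Metric.closedBall_subset_ball (by linarith)
  exact fun w hw => hball (h3 (h2 (h1 hw)))

end SufficiencyTools

section Sufficiency

variable {X : Type*} [MetricSpace X] [SecondCountableTopology X]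

lemma sufficiency [Nonempty X] (γ : Set (Set X)) (hγc : γ.Countable)
    (hπ : ∀ U : Set X, IsOpen U → U.Nonempty → ∃ A ∈ γ, A ⊆ U)
    (hI : ∀ A ∈ γ, IsISet A) :
    @SeparableSpace C(X, ℝ) (biPointOpenTopology X) := by
  classical
  letI tph : TopologicalSpace C(X, ℝ) := biPointOpenTopology X
  obtain ⟨b, hbc, hbne, hbasis⟩ := exists_countable_basis X
  -- every nonempty open set is infinite
  have hinf : ∀ U : Set X, IsOpen U → U.Nonempty → U.Infinite := by
    intro U hU hUne
    obtain ⟨A, hAγ, hAU⟩ := hπ U hU hUne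
    obtain ⟨w, a, c, hw, hac, hIcc⟩ := hI A hAγ
    have hAinf : A.Infinite := by
      intro hAfin
      exact (Set.Icc_infinite hac) ((hAfin.image w).subset hIcc)
    exact hAinf.mono hAU
  -- chosen Urysohn functions
  set uCM : Set X → Set X → C(X, ℝ) := fun P Q => (ury_exists P Q).choose with huCM
  have huprop : ∀ P Q : Set X, (∀ x, uCM P Q x ∈ Icc (0:ℝ) 1) ∧
      (closure P ⊆ Q → IsOpen Q → (EqOn (uCM P Q) 1 (closure P) ∧ EqOn (uCM P Q) 0 Qᶜ)) :=
    fun P Q => (ury_exists P Q).choose_spec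
  -- chosen I-set witnesses
  have hwitex : ∀ A : Set X, ∃ w : X → ℝ, ∃ a c : ℝ, Continuous w ∧
      (A ∈ γ → a < c ∧ Icc a c ⊆ w '' A) := by
    intro A
    by_cases hA : A ∈ γ
    · obtain ⟨w, a, c, hw, hac, hIcc⟩ := hI A hA
      exact ⟨w, a, c, hw, fun _ => ⟨hac, hIcc⟩⟩
    · exact ⟨fun _ => 0, 0, 1, continuous_const, fun h => absurd h hA⟩
  choose wit wita witc hwitcont hwitspec using hwitex
  set kCM : Set X → ℕ → C(X, ℝ) := fun A M =>
    ⟨fun x => clampAff (wita A) (witc A) M (wit A x),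
      (continuous_clampAff _ _ _).comp (hwitcont A)⟩ with hkCM
  -- countable dense set for the point-open part
  set Dp : Set C(X, ℝ) := (fun l : List (ℚ × Set X × Set X) =>
      (l.map (fun p => ((p.1 : ℝ) • uCM p.2.1 p.2.2))).sum) ''
      {l | ∀ p ∈ l, p.2.1 ∈ b ∧ p.2.2 ∈ b} with hDp
  have hDpc : Dp.Countable := by
    apply Set.Countable.image
    have : {l : List (ℚ × Set X × Set X) | ∀ p ∈ l, p.2.1 ∈ b ∧ p.2.2 ∈ b}
        = {l | ∀ p ∈ l, p ∈ ((univ : Set ℚ) ×ˢ (b ×ˢ b))} := by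
      ext l
      simp [Set.mem_prod]
    rw [this]
    exact countable_lists (Set.Countable.prod countable_univ (hbc.prod hbc))
  -- Dp hits all finite point conditions
  have hDspec : ∀ (s : Finset X) (uu : X → Set ℝ), (∀ x ∈ s, IsOpen (uu x)) →
      (∀ x ∈ s, (uu x).Nonempty) → ∃ d ∈ Dp, ∀ x ∈ s, d x ∈ uu x := by
    intro s uu huo hune
    have hqex : ∀ x : X, ∃ q : ℚ, x ∈ s → (q:ℝ) ∈ uu x := by
      intro x
      by_cases hx : x ∈ s
      · obtain ⟨q, hq⟩ := Rat.denseRange_cast.exists_mem_open (huo x hx) (hune x hx)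
        exact ⟨q, fun _ => hq⟩
      · exact ⟨0, fun h => absurd h hx⟩
    choose qq hqq using hqex
    obtain ⟨ε, hε, hdisj⟩ := exists_disjoint_balls s
    have hpairex : ∀ x : X, ∃ P Q : Set X, x ∈ s →
        (P ∈ b ∧ Q ∈ b ∧ x ∈ P ∧ closure P ⊆ Q ∧ Q ⊆ Metric.ball x (ε x)) := by
      intro x
      by_cases hx : x ∈ s
      · obtain ⟨P, Q, h1, h2, h3, h4, h5⟩ := exists_basis_pair hbasis
          Metric.isOpen_ball (Metric.mem_ball_self (hε x))
        exact ⟨P, Q, fun _ => ⟨h1, h2, h3, h4, h5⟩⟩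
      · exact ⟨∅, ∅, fun h => absurd h hx⟩
    choose P Q hPQ using hpairex
    refine ⟨_, ⟨s.toList.map (fun x => (qq x, P x, Q x)), ?_, rfl⟩, ?_⟩
    · intro p hp
      obtain ⟨x, hx, rfl⟩ := List.mem_map.1 hp
      have hx' : x ∈ s := Finset.mem_toList.1 hx
      exact ⟨(hPQ x hx').1, (hPQ x hx').2.1⟩
    · intro x₀ hx₀
      rw [coe_list_sum]
      simp only [List.map_map]
      rw [list_sum_single s.toList _ x₀ (Finset.mem_toList.2 hx₀) s.nodup_toList ?_]
      · simp only [Function.comp_apply, ContinuousMap.smul_apply, smul_eq_mul]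
        have h1 : uCM (P x₀) (Q x₀) x₀ = 1 := by
          have hp := hPQ x₀ hx₀
          have := ((huprop (P x₀) (Q x₀)).2 hp.2.2.2.1 (hbasis.isOpen hp.2.1)).1
          have hx₀cl : x₀ ∈ closure (P x₀) := subset_closure hp.2.2.1
          simpa using this hx₀cl
        rw [h1, mul_one]
        exact hqq x₀ hx₀
      · intro x hx hne
        have hx' : x ∈ s := Finset.mem_toList.1 hx
        have hp := hPQ x hx'
        have hx₀Q : x₀ ∉ Q x := by
          intro hmem
          have hball : x₀ ∈ Metric.ball x (ε x) := hp.2.2.2.2 hmem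
          have hself : x₀ ∈ Metric.ball x₀ (ε x₀) := Metric.mem_ball_self (hε x₀)
          exact (Set.disjoint_left.1 (hdisj x hx' x₀ hx₀ hne)) hball hself
        have hzero : uCM (P x) (Q x) x₀ = 0 := by
          simpa using ((huprop (P x) (Q x)).2 hp.2.2.2.1 (hbasis.isOpen hp.2.1)).2 hx₀Q
        simp only [Function.comp_apply, ContinuousMap.smul_apply, smul_eq_mul]
        rw [hzero, mul_zero]
  -- the index pool for blending data
  set UK : Set (C(X, ℝ) × C(X, ℝ)) := (fun w : (Set X × Set X) × Set X × ℕ =>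
      (uCM w.1.1 w.1.2, kCM w.2.1 w.2.2)) '' ((b ×ˢ b) ×ˢ (γ ×ˢ (univ : Set ℕ))) with hUK
  have hUKc : UK.Countable := (((hbc.prod hbc).prod (hγc.prod countable_univ))).image _
  set T : Set C(X, ℝ) := (fun pr : C(X, ℝ) × List (C(X, ℝ) × C(X, ℝ)) => blend pr.1 pr.2) ''
      (Dp ×ˢ {l | ∀ p ∈ l, p ∈ UK}) with hT
  have hTc : T.Countable := ((hDpc.prod (countable_lists hUKc))).image _
  refine ⟨⟨T, hTc, ?_⟩⟩
  -- subbasis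
  set Sp : Set (Set C(X, ℝ)) :=
    {S | ∃ (x : X) (U : Set ℝ), IsOpen U ∧ S = {f : C(X, ℝ) | f x ∈ U}} with hSp
  set Sh : Set (Set C(X, ℝ)) :=
    {S | ∃ (V : Set X) (r : ℝ), IsOpen V ∧ S = {f : C(X, ℝ) | ∃ x ∈ V, f x = r}} with hSh
  have hbasis2 : IsTopologicalBasis ((fun f : Set (Set C(X, ℝ)) => ⋂₀ f) ''
      {f : Set (Set C(X, ℝ)) | f.Finite ∧ f ⊆ Sp ∪ Sh}) :=
    isTopologicalBasis_of_subbasis rfl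
  rw [hbasis2.dense_iff]
  rintro o ⟨F, ⟨hFfin, hFsub⟩, rfl⟩ ⟨h, hh⟩
  -- witnesses for the subbasic sets
  have hPdataex : ∀ S : Set C(X, ℝ), ∃ (x : X) (U : Set ℝ),
      S ∈ Sp → (IsOpen U ∧ S = {f : C(X, ℝ) | f x ∈ U}) := by
    intro S
    by_cases hS : S ∈ Sp
    · obtain ⟨x, U, hU, hSU⟩ := hS
      exact ⟨x, U, fun _ => ⟨hU, hSU⟩⟩
    · exact ⟨Classical.arbitrary X, ∅, fun h' => absurd h' hS⟩
  choose cx cU hcP using hPdataex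
  have hHdataex : ∀ S : Set C(X, ℝ), ∃ (V : Set X) (r : ℝ),
      S ∈ Sh → (IsOpen V ∧ S = {f : C(X, ℝ) | ∃ x ∈ V, f x = r}) := by
    intro S
    by_cases hS : S ∈ Sh
    · obtain ⟨V, r, hV, hSV⟩ := hS
      exact ⟨V, r, fun _ => ⟨hV, hSV⟩⟩
    · exact ⟨∅, 0, fun h' => absurd h' hS⟩
  choose cV cr hcH using hHdataex
  set Fs : Finset (Set C(X, ℝ)) := hFfin.toFinset with hFs
  set Fhs : Finset (Set C(X, ℝ)) := Fs.filter (· ∈ Sh) with hFhs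
  set Fps : Finset (Set C(X, ℝ)) := Fs.filter (fun S => S ∈ Sp ∧ S ∉ Sh) with hFps
  have hmemF : ∀ S ∈ Fs, S ∈ F := by
    intro S hS
    rwa [hFs, Set.Finite.mem_toFinset] at hS
  have hmemh : ∀ S ∈ F, h ∈ S := fun S hS => hh S hS
  set pts : Finset X := Fps.image cx with hpts
  -- choose d
  set uu : X → Set ℝ := fun x => ⋂ S ∈ Fps.filter (fun S => cx S = x), cU S with huu
  have huuo : ∀ x ∈ pts, IsOpen (uu x) := by
    intro x hx
    apply isOpen_biInter_finset
    intro S hS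
    have hS' := Finset.mem_filter.1 hS
    have := Finset.mem_filter.1 hS'.1
    exact (hcP S this.2.1).1
  have huune : ∀ x ∈ pts, (uu x).Nonempty := by
    intro x hx
    refine ⟨h x, ?_⟩
    rw [huu]
    apply Set.mem_biInter
    intro S hS
    have hS' := Finset.mem_filter.1 hS
    have hSFps := Finset.mem_filter.1 hS'.1
    have hhS : h ∈ S := hmemh S (hmemF S hSFps.1)
    have hSU := (hcP S hSFps.2.1).2
    rw [hSU] at hhS
    rw [← hS'.2]
    exact hhS
  obtain ⟨d, hdDp, hdval⟩ := hDspec pts uu huuo huune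
  -- data for the h-part
  have hVprops : ∀ S ∈ Fhs, IsOpen (cV S \ (pts : Set X)) ∧ (cV S \ (pts : Set X)).Nonempty := by
    intro S hS
    have hSF := Finset.mem_filter.1 hS
    have hSh' := hSF.2
    have hVo := (hcH S hSh').1
    have hSV := (hcH S hSh').2
    have hVne : (cV S).Nonempty := by
      have hhS : h ∈ S := hmemh S (hmemF S hSF.1)
      rw [hSV] at hhS
      obtain ⟨y, hy, -⟩ := hhS
      exact ⟨y, hy⟩
    have hWo : IsOpen (cV S \ (pts : Set X)) := hVo.sdiff (pts.finite_toSet.isClosed)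
    refine ⟨hWo, ?_⟩
    exact ((hinf (cV S) hVo hVne).diff pts.finite_toSet).nonempty
  have hWinf : ∀ S ∈ Fhs, (cV S \ (pts : Set X)).Infinite := by
    intro S hS
    exact hinf _ (hVprops S hS).1 (hVprops S hS).2
  obtain ⟨z, hzmem, hzinj⟩ := exists_inj_choice Fhs (fun S => cV S \ (pts : Set X)) hWinf
  set zs : Finset X := Fhs.image z with hzs
  obtain ⟨ε, hε, hdisj⟩ := exists_disjoint_balls zs
  have hOdata : ∀ S : Set C(X, ℝ), ∃ P Q : Set X, S ∈ Fhs →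
      (P ∈ b ∧ Q ∈ b ∧ z S ∈ P ∧ closure P ⊆ Q ∧
        Q ⊆ Metric.ball (z S) (ε (z S)) ∩ (cV S \ (pts : Set X))) := by
    intro S
    by_cases hS : S ∈ Fhs
    · have hOop : IsOpen (Metric.ball (z S) (ε (z S)) ∩ (cV S \ (pts : Set X))) :=
        Metric.isOpen_ball.inter (hVprops S hS).1
      have hzO : z S ∈ Metric.ball (z S) (ε (z S)) ∩ (cV S \ (pts : Set X)) :=
        ⟨Metric.mem_ball_self (hε (z S)), hzmem S hS⟩
      obtain ⟨P, Q, h1, h2, h3, h4, h5⟩ := exists_basis_pair hbasis hOop hzO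
      exact ⟨P, Q, fun _ => ⟨h1, h2, h3, h4, h5⟩⟩
    · exact ⟨∅, ∅, fun h' => absurd h' hS⟩
  choose P2 Q2 hPQ2 using hOdata
  have hAdata : ∀ S : Set C(X, ℝ), ∃ A : Set X, S ∈ Fhs → (A ∈ γ ∧ A ⊆ P2 S) := by
    intro S
    by_cases hS : S ∈ Fhs
    · obtain ⟨A, hAγ, hAP⟩ := hπ (P2 S) (hbasis.isOpen (hPQ2 S hS).1)
        ⟨z S, (hPQ2 S hS).2.2.1⟩
      exact ⟨A, fun _ => ⟨hAγ, hAP⟩⟩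
    · exact ⟨∅, fun h' => absurd h' hS⟩
  choose AS hAS using hAdata
  have hMdata : ∀ S : Set C(X, ℝ), ∃ M : ℕ, 0 < M ∧ |cr S| ≤ M := by
    intro S
    refine ⟨⌈|cr S|⌉₊ + 1, Nat.succ_pos _, ?_⟩
    push_cast
    have := Nat.le_ceil |cr S|
    linarith
  choose MS hMS using hMdata
  set l : List (C(X, ℝ) × C(X, ℝ)) :=
    Fhs.toList.map (fun S => (uCM (P2 S) (Q2 S), kCM (AS S) (MS S))) with hl
  set g : C(X, ℝ) := blend d l with hg
  have hgT : g ∈ T := by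
    refine ⟨(d, l), ⟨hdDp, ?_⟩, rfl⟩
    intro p hp
    obtain ⟨S, hSl, rfl⟩ := List.mem_map.1 hp
    have hS : S ∈ Fhs := Finset.mem_toList.1 hSl
    exact ⟨((P2 S, Q2 S), (AS S, MS S)),
      ⟨⟨(hPQ2 S hS).1, (hPQ2 S hS).2.1⟩, (hAS S hS).1, trivial⟩, rfl⟩
  -- g is in all subbasic sets
  have hgo : g ∈ ⋂₀ F := by
    intro S hSF
    have hSFs : S ∈ Fs := by rwa [hFs, Set.Finite.mem_toFinset]
    by_cases hSh' : S ∈ Sh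
    · -- h-type condition
      have hS : S ∈ Fhs := Finset.mem_filter.2 ⟨hSFs, hSh'⟩
      have hpq := hPQ2 S hS
      have hQsub := hpq.2.2.2.2
      have hA := hAS S hS
      have hspec := hwitspec (AS S) hA.1
      obtain ⟨t, htIcc, hteq⟩ := clampAff_surj hspec.1 (MS S) (hMS S).1 (hMS S).2
      obtain ⟨y, hyA, hwy⟩ := hspec.2 htIcc
      -- y evaluates g to cr S
      have hyP : y ∈ P2 S := hA.2 hyA
      have hycl : y ∈ closure (P2 S) := subset_closure hyP
      have hyQ : y ∈ Q2 S := hpq.2.2.2.1 hycl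
      have hu1 : uCM (P2 S) (Q2 S) y = 1 := by
        simpa using ((huprop (P2 S) (Q2 S)).2 hpq.2.2.2.1 (hbasis.isOpen hpq.2.1)).1 hycl
      -- split the list at S
      obtain ⟨t₁, t₂, hsplit⟩ := List.append_of_mem (Finset.mem_toList.2 hS)
      have hnodup : (t₁ ++ S :: t₂).Nodup := by rw [← hsplit]; exact Fhs.nodup_toList
      have hSnott₂ : S ∉ t₂ := by
        rw [List.nodup_append] at hnodup
        exact (List.nodup_cons.1 hnodup.2.1).1
      have hlsplit : l = t₁.map (fun S => (uCM (P2 S) (Q2 S), kCM (AS S) (MS S)))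
          ++ (uCM (P2 S) (Q2 S), kCM (AS S) (MS S)) ::
            t₂.map (fun S => (uCM (P2 S) (Q2 S), kCM (AS S) (MS S))) := by
        rw [hl, hsplit, List.map_append, List.map_cons]
      have hgy : g y = kCM (AS S) (MS S) y := by
        rw [hg, hlsplit]
        apply blend_apply_one _ _ _ _ _ _ hu1
        intro p hp
        obtain ⟨S', hS't₂, rfl⟩ := List.mem_map.1 hp
        have hS' : S' ∈ Fhs := by
          rw [← Finset.mem_toList, hsplit]
          exact List.mem_append.2 (Or.inr (List.mem_cons_of_mem _ hS't₂))
        have hSS' : S' ≠ S := fun hEq => hSnott₂ (hEq ▸ hS't₂)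
        -- y not in Q2 S'
        have hzne : z S ≠ z S' := fun hEq =>
          hSS' (hzinj (Finset.mem_coe.2 hS') (Finset.mem_coe.2 hS) (hEq.symm))
        have hyball : y ∈ Metric.ball (z S) (ε (z S)) := (hQsub hyQ).1
        have hdisj' := hdisj (z S) (Finset.mem_image_of_mem z hS)
          (z S') (Finset.mem_image_of_mem z hS') hzne
        have hynotball : y ∉ Metric.ball (z S') (ε (z S')) :=
          fun hmem => (Set.disjoint_left.1 hdisj') hyball hmem
        have hyQ' : y ∉ Q2 S' := fun hmem => hynotball ((hPQ2 S' hS').2.2.2.2 hmem).1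
        simpa using ((huprop (P2 S') (Q2 S')).2 (hPQ2 S' hS').2.2.2.1
          (hbasis.isOpen (hPQ2 S' hS').2.1)).2 hyQ'
      have hky : kCM (AS S) (MS S) y = cr S := by
        rw [hkCM]
        show clampAff (wita (AS S)) (witc (AS S)) (MS S) (wit (AS S) y) = cr S
        rw [hwy]
        exact hteq
      have hyV : y ∈ cV S := ((hQsub hyQ).2).1
      have hSV := (hcH S hSh').2
      rw [hSV]
      exact ⟨y, hyV, by rw [hgy, hky]⟩
    · -- p-type condition
      have hSp' : S ∈ Sp := (hFsub (hmemF S hSFs)).resolve_right hSh'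
      have hSps : S ∈ Fps := Finset.mem_filter.2 ⟨hSFs, hSp', hSh'⟩
      have hxpts : cx S ∈ pts := Finset.mem_image_of_mem cx hSps
      have hgx : g (cx S) = d (cx S) := by
        rw [hg]
        apply blend_apply_zero
        intro p hp
        obtain ⟨S', hS'l, rfl⟩ := List.mem_map.1 hp
        have hS' : S' ∈ Fhs := Finset.mem_toList.1 hS'l
        have hxQ' : cx S ∉ Q2 S' := by
          intro hmem
          exact (((hPQ2 S' hS').2.2.2.2 hmem).2).2 (Finset.mem_coe.2 hxpts)
        simpa using ((huprop (P2 S') (Q2 S')).2 (hPQ2 S' hS').2.2.2.1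
          (hbasis.isOpen (hPQ2 S' hS').2.1)).2 hxQ'
      have hdin : d (cx S) ∈ uu (cx S) := hdval (cx S) hxpts
      have hfilter : S ∈ Fps.filter (fun S' => cx S' = cx S) :=
        Finset.mem_filter.2 ⟨hSps, rfl⟩
      have hdU : d (cx S) ∈ cU S := by
        rw [huu] at hdin
        exact Set.mem_iInter₂.1 hdin S hfilter
      rw [(hcP S hSp').2]
      show g (cx S) ∈ cU S
      rw [hgx]
      exact hdU
  exact ⟨g, hgo, hgT⟩

end Sufficiency


/-- For a separable metrizable space `X`, `C_ph(X)` is separable iff `X` has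
a countable π-network consisting of 𝓘-sets. -/
theorem stmt15 {X : Type*} [TopologicalSpace X] [MetrizableSpace X] [SeparableSpace X] :
    @SeparableSpace C(X, ℝ) (biPointOpenTopology X) ↔
      ∃ γ : Set (Set X), γ.Countable ∧ IsPiNetwork γ ∧ ∀ A ∈ γ, IsISet A := by
  letI : MetricSpace X := TopologicalSpace.metrizableSpaceMetric X
  haveI : SecondCountableTopology X := UniformSpace.secondCountable_of_separable X
  constructor
  · exact necessity
  · rintro ⟨γ, hγc, ⟨hne, hπ⟩, hI⟩
    rcases isEmpty_or_nonempty X with hX | hX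
    · letI : TopologicalSpace C(X, ℝ) := biPointOpenTopology X
      haveI : Subsingleton C(X, ℝ) := ⟨fun f g => by ext x; exact isEmptyElim x⟩
      exact ⟨⟨Set.univ, Set.countable_univ, dense_univ⟩⟩
    · exact sufficiency γ hγc hπ hI
end

section
/- The space C_h(ℙ), where ℙ is the space of irrational numbers with the subspace topology from ℝ, is separable. -/
open TopologicalSpace Set Topology

namespace St18
open Filter

noncomputable section
open scoped Classical

/-- weight `(1/2)^(n+1)` -/
def w (n : ℕ) : ℝ := (1/2)^(n+1)

lemma w_pos (n : ℕ) : 0 < w n := by simp only [w]; positivity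

lemma w_nonneg (n : ℕ) : 0 ≤ w n := (w_pos n).le

lemma summable_w : Summable w := by
  have := summable_geometric_two.mul_right (1/2 : ℝ)
  apply this.congr
  intro n
  simp [w, pow_succ]

lemma tsum_w : ∑' n, w n = 1 := by
  simp only [w, pow_succ]
  rw [tsum_mul_right, tsum_geometric_two]
  norm_num

lemma w_succ (n : ℕ) : w (n+1) = (1/2) * w n := by
  simp [w, pow_succ]; ring

lemma w_le_one (n : ℕ) : w n ≤ 1 := by
  simp only [w]
  exact pow_le_one₀ (by norm_num) (by norm_num)

/-- binary digit `n` of `x` (of the fractional expansion). -/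
def dg (n : ℕ) (x : ℝ) : ℤ := ⌊(2:ℝ)^(n+1) * x⌋ - 2 * ⌊(2:ℝ)^n * x⌋

lemma dg01 (n : ℕ) (x : ℝ) : dg n x = 0 ∨ dg n x = 1 := by
  set t := (2:ℝ)^n * x with ht
  have h2t : (2:ℝ)^(n+1) * x = 2 * t := by rw [ht, pow_succ]; ring
  have f1 : (⌊t⌋ : ℝ) ≤ t := Int.floor_le t
  have f2 : t < ⌊t⌋ + 1 := Int.lt_floor_add_one t
  have hlow : 2 * ⌊t⌋ ≤ ⌊2*t⌋ := by
    apply Int.le_floor.mpr; push_cast; linarith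
  have hhigh : ⌊2*t⌋ < 2*⌊t⌋ + 2 := by
    apply Int.floor_lt.mpr; push_cast; linarith
  unfold dg
  rw [h2t, ← ht]
  omega

lemma dg_nonneg (n : ℕ) (x : ℝ) : 0 ≤ dg n x := by rcases dg01 n x with h | h <;> omega

lemma dg_le_one (n : ℕ) (x : ℝ) : dg n x ≤ 1 := by rcases dg01 n x with h | h <;> omega

/-- Every real has a zero binary digit beyond any point. -/
lemma exists_zero_digit (x : ℝ) (m : ℕ) : ∃ n, m ≤ n ∧ dg n x = 0 := by
  by_contra h
  push_neg at h
  have hone : ∀ n, m ≤ n → dg n x = 1 := fun n hn => by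
    rcases dg01 n x with h0 | h1
    · exact absurd h0 (h n hn)
    · exact h1
  set c : ℤ := ⌊(2:ℝ)^m * x⌋ with hc
  have hrec : ∀ j : ℕ, ⌊(2:ℝ)^(m+j) * x⌋ + 1 = 2^j * (c + 1) := by
    intro j
    induction j with
    | zero => simp [hc]
    | succ j ih =>
        have h1 := hone (m+j) (Nat.le_add_right m j)
        unfold dg at h1
        have h2 : ⌊(2:ℝ)^(m+j+1) * x⌋ + 1 = 2*(⌊(2:ℝ)^(m+j) * x⌋ + 1) := by omega
        rw [show m + (j+1) = m + j + 1 from rfl, h2, ih, pow_succ]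
        ring
  have hlt : (2:ℝ)^m * x < c + 1 := by
    have := Int.lt_floor_add_one ((2:ℝ)^m * x)
    push_cast
    linarith
  set δ : ℝ := (c + 1) - (2:ℝ)^m * x with hδ
  have hδpos : 0 < δ := by linarith
  obtain ⟨j, hj⟩ := pow_unbounded_of_one_lt (1/δ) (by norm_num : (1:ℝ) < 2)
  have hub : (2:ℝ)^j * δ ≤ 1 := by
    have hfl : ((2:ℝ)^j * (c+1) - 1 : ℝ) ≤ (2:ℝ)^(m+j) * x := by
      have h1 := hrec j
      have h2 : ((⌊(2:ℝ)^(m+j) * x⌋ : ℝ)) ≤ (2:ℝ)^(m+j) * x := Int.floor_le _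
      have h3 : ((⌊(2:ℝ)^(m+j) * x⌋ : ℝ)) = (2:ℝ)^j * (c+1) - 1 := by
        have := congrArg (fun z : ℤ => (z : ℝ)) h1
        push_cast at this
        linarith
      linarith
    have hpow : (2:ℝ)^(m+j) = (2:ℝ)^m * (2:ℝ)^j := pow_add 2 m j
    rw [hpow] at hfl
    nlinarith
  have : (1:ℝ) < 2^j * δ := by
    rw [div_lt_iff₀ hδpos] at hj
    linarith [hj]
  linarith


/-- position of the `k`-th zero digit -/
def ps (x : ℝ) : ℕ → ℕ
  | 0 => sInf {n | dg n x = 0}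
  | (k+1) => sInf {n | ps x k < n ∧ dg n x = 0}

lemma ps_zero_mem (x : ℝ) : dg (ps x 0) x = 0 := by
  have hne : {n | dg n x = 0}.Nonempty := by
    obtain ⟨n, _, hn⟩ := exists_zero_digit x 0
    exact ⟨n, hn⟩
  exact Nat.sInf_mem hne

lemma ps_zero_min (x : ℝ) {n : ℕ} (h : n < ps x 0) : dg n x ≠ 0 := by
  intro h0
  have h1 := Nat.sInf_le (show n ∈ {n | dg n x = 0} from h0)
  have h2 : ps x 0 = sInf {n | dg n x = 0} := rfl
  omega

lemma ps_succ_mem (x : ℝ) (k : ℕ) : ps x k < ps x (k+1) ∧ dg (ps x (k+1)) x = 0 := by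
  have hne : {n | ps x k < n ∧ dg n x = 0}.Nonempty := by
    obtain ⟨n, hn1, hn2⟩ := exists_zero_digit x (ps x k + 1)
    exact ⟨n, by omega, hn2⟩
  exact Nat.sInf_mem hne

lemma ps_succ_min (x : ℝ) (k : ℕ) {n : ℕ} (h1 : ps x k < n) (h2 : n < ps x (k+1)) :
    dg n x ≠ 0 := by
  intro h0
  have h3 := Nat.sInf_le (show n ∈ {n | ps x k < n ∧ dg n x = 0} from ⟨h1, h0⟩)
  have h4 : ps x (k+1) = sInf {n | ps x k < n ∧ dg n x = 0} := rfl
  omega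

lemma ps_strictMono (x : ℝ) : StrictMono (ps x) :=
  strictMono_nat_of_lt_succ fun k => (ps_succ_mem x k).1

/-- run lengths -/
def sg (x : ℝ) : ℕ → ℕ
  | 0 => ps x 0
  | (k+1) => ps x (k+1) - ps x k - 1

/-- agreement of digits below `N` forces agreement of `ps` (and `sg`). -/
lemma ps_congr {x y : ℝ} {N K : ℕ} (hd : ∀ n, n < N → dg n y = dg n x)
    (hK : ps x K < N) : ∀ j, j ≤ K → ps y j = ps x j := by
  intro j hj
  induction j with
  | zero =>
      have hx0N : ps x 0 < N := lt_of_le_of_lt ((ps_strictMono x).monotone (Nat.zero_le K)) hK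
      have h1 : ps y 0 ≤ ps x 0 := by
        apply Nat.sInf_le
        show dg (ps x 0) y = 0
        rw [hd _ hx0N]; exact ps_zero_mem x
      have h2 : ps x 0 ≤ ps y 0 := by
        apply Nat.sInf_le
        show dg (ps y 0) x = 0
        rw [← hd _ (lt_of_le_of_lt h1 hx0N)]
        exact ps_zero_mem y
      omega
  | succ j ih =>
      have hih := ih (le_trans (Nat.le_succ j) hj)
      have hxjN : ps x (j+1) < N := lt_of_le_of_lt ((ps_strictMono x).monotone hj) hK
      have h1 : ps y (j+1) ≤ ps x (j+1) := by
        apply Nat.sInf_le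
        refine ⟨by rw [hih]; exact (ps_succ_mem x j).1, ?_⟩
        rw [hd _ hxjN]; exact (ps_succ_mem x j).2
      have h2 : ps x (j+1) ≤ ps y (j+1) := by
        apply Nat.sInf_le
        refine ⟨by rw [← hih]; exact (ps_succ_mem y j).1, ?_⟩
        rw [← hd _ (lt_of_le_of_lt h1 hxjN)]
        exact (ps_succ_mem y j).2
      omega

lemma sg_congr {x y : ℝ} {N K : ℕ} (hd : ∀ n, n < N → dg n y = dg n x)
    (hK : ps x K < N) : ∀ j, j ≤ K → sg y j = sg x j := by
  intro j hj
  match j with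
  | 0 => show ps y 0 = ps x 0; exact ps_congr hd hK 0 (Nat.zero_le K)
  | (k+1) =>
      show ps y (k+1) - ps y k - 1 = ps x (k+1) - ps x k - 1
      rw [ps_congr hd hK _ hj, ps_congr hd hK k (le_trans (Nat.le_succ k) hj)]


section Tail
variable {ε : ℕ → ℕ} (hε : ∀ n, ε n ≤ 1)

/-- the tail sum from position `n` -/
def tl (ε : ℕ → ℕ) (n : ℕ) : ℝ := ∑' i, (ε (n+i) : ℝ) * w i

/-- the integer part sequence -/
def Aint (ε : ℕ → ℕ) : ℕ → ℤ
  | 0 => 0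
  | (n+1) => 2 * Aint ε n + ε n

include hε

lemma summable_tail (n : ℕ) : Summable (fun i => (ε (n+i) : ℝ) * w i) := by
  apply Summable.of_nonneg_of_le (fun i => mul_nonneg (Nat.cast_nonneg _) (w_nonneg i)) (fun i => ?_) summable_w
  have h1 : (ε (n+i) : ℝ) ≤ 1 := by exact_mod_cast hε (n+i)
  nlinarith [w_pos i, w_nonneg i]

lemma tl_nonneg (n : ℕ) : 0 ≤ tl ε n :=
  tsum_nonneg (fun i => mul_nonneg (Nat.cast_nonneg _) (w_nonneg i))

lemma tl_le (n i0 : ℕ) (h0 : ε (n + i0) = 0) : tl ε n ≤ 1 - w i0 := by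
  have hsum : Summable (fun i => if i = i0 then (0:ℝ) else w i) := by
    apply Summable.of_nonneg_of_le (fun i => ?_) (fun i => ?_) summable_w
    · split <;> simp [w_nonneg]
    · split <;> simp [w_nonneg, w_le_one, le_refl]
  have hle : tl ε n ≤ ∑' i, if i = i0 then (0:ℝ) else w i := by
    apply Summable.tsum_le_tsum _ (summable_tail hε n) hsum
    intro i
    by_cases h : i = i0
    · subst h; simp [h0]
    · simp only [if_neg h]
      have h1 : (ε (n+i) : ℝ) ≤ 1 := by exact_mod_cast hε (n+i)
      nlinarith [w_pos i, w_nonneg i]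
  have heq : (∑' i, if i = i0 then (0:ℝ) else w i) = 1 - w i0 := by
    have hdiff : ∀ i, (if i = i0 then (0:ℝ) else w i) = w i - (if i = i0 then w i0 else 0) := by
      intro i; by_cases h : i = i0 <;> simp [h]
    rw [tsum_congr hdiff, Summable.tsum_sub summable_w]
    · rw [tsum_w, tsum_ite_eq]
    · exact (hasSum_ite_eq i0 (w i0)).summable
  linarith [hle, heq.le, heq.ge]

lemma tl_rec (n : ℕ) : tl ε n = (ε n : ℝ) * (1/2) + (1/2) * tl ε (n+1) := by
  have h1 : tl ε n = (ε (n+0) : ℝ) * w 0 + ∑' i, (ε (n+(i+1)) : ℝ) * w (i+1) := by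
    unfold tl
    exact Summable.tsum_eq_zero_add (summable_tail hε n)
  have h2 : (∑' i, (ε (n+(i+1)) : ℝ) * w (i+1)) = (1/2) * tl ε (n+1) := by
    unfold tl
    rw [← tsum_mul_left]
    apply tsum_congr
    intro i
    rw [w_succ]
    have : n + (i+1) = (n+1) + i := by omega
    rw [this]; ring
  rw [h1, h2]
  simp only [Nat.add_zero]
  have : w 0 = 1/2 := by simp [w]
  rw [this]

lemma pow_mul_tl (hz : ∀ m, ∃ n, m ≤ n ∧ ε n = 0) :
    ∀ n, (2:ℝ)^n * tl ε 0 = (Aint ε n : ℝ) + tl ε n := by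
  intro n
  induction n with
  | zero => simp [Aint]
  | succ n ih =>
      have h1 : (2:ℝ)^(n+1) * tl ε 0 = 2 * ((2:ℝ)^n * tl ε 0) := by ring
      rw [h1, ih, tl_rec hε n]
      show _ = ((2 * Aint ε n + ε n : ℤ) : ℝ) + tl ε (n+1)
      push_cast
      ring

lemma tl_lt_one (hz : ∀ m, ∃ n, m ≤ n ∧ ε n = 0) (n : ℕ) : tl ε n < 1 := by
  obtain ⟨i, hi, h0⟩ := hz n
  have : ε (n + (i - n)) = 0 := by
    have : n + (i - n) = i := by omega
    rw [this]; exact h0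
  have := tl_le hε n (i - n) this
  linarith [w_pos (i - n)]

lemma floor_pow_tl (hz : ∀ m, ∃ n, m ≤ n ∧ ε n = 0) (n : ℕ) :
    ⌊(2:ℝ)^n * tl ε 0⌋ = Aint ε n := by
  rw [pow_mul_tl hε hz n, Int.floor_intCast_add]
  have h0 : ⌊tl ε n⌋ = 0 := by
    rw [Int.floor_eq_zero_iff]
    exact ⟨tl_nonneg hε n, tl_lt_one hε hz n⟩
  omega

lemma dg_tl (hz : ∀ m, ∃ n, m ≤ n ∧ ε n = 0) (n : ℕ) :
    dg n (tl ε 0) = (ε n : ℤ) := by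
  unfold dg
  rw [floor_pow_tl hε hz (n+1), floor_pow_tl hε hz n]
  show 2 * Aint ε n + ε n - 2 * Aint ε n = ε n
  ring

end Tail

section Realize
variable (σ : ℕ → ℕ)

/-- positions of zeros for prescribed run lengths -/
def Pp (σ : ℕ → ℕ) : ℕ → ℕ
  | 0 => σ 0
  | (k+1) => Pp σ k + σ (k+1) + 1

lemma Pp_strictMono : StrictMono (Pp σ) :=
  strictMono_nat_of_lt_succ fun k => by simp [Pp]

/-- prescribed digit sequence: `0` exactly at the positions `Pp σ k` -/
def eps (σ : ℕ → ℕ) (n : ℕ) : ℕ := if ∃ k, Pp σ k = n then 0 else 1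

lemma eps_le_one (n : ℕ) : eps σ n ≤ 1 := by unfold eps; split <;> omega

lemma eps_Pp (k : ℕ) : eps σ (Pp σ k) = 0 := by unfold eps; rw [if_pos ⟨k, rfl⟩]

lemma eps_zero_iff (n : ℕ) : eps σ n = 0 ↔ ∃ k, Pp σ k = n := by
  unfold eps; split <;> simp_all

lemma eps_has_zeros : ∀ m, ∃ n, m ≤ n ∧ eps σ n = 0 := by
  intro m
  refine ⟨Pp σ m, ?_, eps_Pp σ m⟩
  calc m ≤ Pp σ m := (Pp_strictMono σ).le_apply
  
/-- the real number with digit sequence `eps σ` -/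
def zr (σ : ℕ → ℕ) : ℝ := tl (eps σ) 0

lemma dg_zr (n : ℕ) : dg n (zr σ) = (eps σ n : ℤ) :=
  dg_tl (eps_le_one σ) (eps_has_zeros σ) n

lemma ps_zr : ∀ k, ps (zr σ) k = Pp σ k := by
  intro k
  induction k with
  | zero =>
      have h1 : ps (zr σ) 0 ≤ Pp σ 0 := by
        apply Nat.sInf_le
        show dg (Pp σ 0) (zr σ) = 0
        rw [dg_zr, eps_Pp]; rfl
      have h2 : Pp σ 0 ≤ ps (zr σ) 0 := by
        by_contra hcon
        push_neg at hcon
        have hz : dg (ps (zr σ) 0) (zr σ) = 0 := ps_zero_mem (zr σ)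
        rw [dg_zr] at hz
        obtain ⟨j, hj⟩ := (eps_zero_iff σ _).mp (by exact_mod_cast hz)
        have : Pp σ 0 ≤ Pp σ j := (Pp_strictMono σ).monotone (Nat.zero_le j)
        omega
      omega
  | succ k ih =>
      have h1 : ps (zr σ) (k+1) ≤ Pp σ (k+1) := by
        apply Nat.sInf_le
        constructor
        · rw [ih]; exact Pp_strictMono σ (Nat.lt_succ_self k)
        · show dg (Pp σ (k+1)) (zr σ) = 0
          rw [dg_zr, eps_Pp]; rfl
      have h2 : Pp σ (k+1) ≤ ps (zr σ) (k+1) := by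
        by_contra hcon
        push_neg at hcon
        have hmem := ps_succ_mem (zr σ) k
        have hz : dg (ps (zr σ) (k+1)) (zr σ) = 0 := hmem.2
        rw [dg_zr] at hz
        obtain ⟨j, hj⟩ := (eps_zero_iff σ _).mp (by exact_mod_cast hz)
        have hgt : Pp σ k < Pp σ j := by rw [hj, ← ih]; exact hmem.1
        have hjk : k < j := by
          by_contra hc
          push_neg at hc
          exact absurd ((Pp_strictMono σ).monotone hc) (by omega)
        have : Pp σ (k+1) ≤ Pp σ j := (Pp_strictMono σ).monotone hjk
        omega
      omega

lemma sg_zr : ∀ k, sg (zr σ) k = σ k := by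
  intro k
  match k with
  | 0 => show ps (zr σ) 0 = σ 0; rw [ps_zr]; rfl
  | (k+1) =>
      show ps (zr σ) (k+1) - ps (zr σ) k - 1 = σ (k+1)
      rw [ps_zr, ps_zr]
      show Pp σ k + σ (k+1) + 1 - Pp σ k - 1 = σ (k+1)
      omega

lemma zr_lt_one : zr σ < 1 := tl_lt_one (eps_le_one σ) (eps_has_zeros σ) 0

lemma zr_nonneg : 0 ≤ zr σ := tl_nonneg (eps_le_one σ) 0

lemma zr_pos (h : ∃ k, σ (k+1) ≠ 0) : 0 < zr σ := by
  obtain ⟨k, hk⟩ := h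
  set n0 := Pp σ k + 1 with hn0
  have he : eps σ n0 = 1 := by
    unfold eps
    rw [if_neg]
    rintro ⟨j, hj⟩
    rcases lt_trichotomy j k with h | h | h
    · have := (Pp_strictMono σ) h
      omega
    · subst h; omega
    · have h1 : k + 1 ≤ j := h
      have := (Pp_strictMono σ).monotone h1
      have h2 : Pp σ (k+1) = Pp σ k + σ (k+1) + 1 := rfl
      omega
  have hterm : w n0 ≤ zr σ := by
    have := Summable.le_tsum (summable_tail (eps_le_one σ) 0) n0
      (fun j _ => mul_nonneg (Nat.cast_nonneg _) (w_nonneg j))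
    calc w n0 = (eps σ (0 + n0) : ℝ) * w n0 := by simp [he]
    _ ≤ ∑' i, (eps σ (0+i) : ℝ) * w i := by
        simpa using this
    _ = zr σ := rfl
  linarith [w_pos n0]

end Realize

section Ceil
variable (u : ℝ)

def cs (u : ℝ) (k : ℕ) : ℤ := ⌈(2:ℝ)^k * u⌉

def iot (u : ℝ) (k : ℕ) : ℕ := (cs u (k+1) - (2 * cs u k - 1)).toNat

lemma cs_bounds (k : ℕ) : 2 * cs u k - 1 ≤ cs u (k+1) ∧ cs u (k+1) ≤ 2 * cs u k := by
  set v : ℝ := (2:ℝ)^k * u with hv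
  have h2v : (2:ℝ)^(k+1) * u = 2 * v := by rw [hv, pow_succ]; ring
  have f1 : v ≤ (⌈v⌉ : ℝ) := Int.le_ceil v
  have f2 : (⌈v⌉ : ℝ) - 1 < v := by linarith [Int.ceil_lt_add_one v]
  constructor
  · have : ((2 * ⌈v⌉ - 2 : ℤ) : ℝ) < 2 * v := by push_cast; linarith
    have h3 : 2 * ⌈v⌉ - 2 < ⌈2 * v⌉ := Int.lt_ceil.mpr this
    show 2 * ⌈v⌉ - 1 ≤ ⌈(2:ℝ)^(k+1) * u⌉
    rw [h2v]; omega
  · show ⌈(2:ℝ)^(k+1) * u⌉ ≤ 2 * ⌈v⌉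
    rw [h2v]
    apply Int.ceil_le.mpr
    push_cast
    linarith

lemma iot_cast (k : ℕ) : (iot u k : ℤ) = cs u (k+1) - 2 * cs u k + 1 := by
  unfold iot
  rw [Int.toNat_of_nonneg]
  · ring
  · have := (cs_bounds u k).1; omega

lemma iot_le_one (k : ℕ) : iot u k ≤ 1 := by
  have h1 := iot_cast u k
  have h2 := (cs_bounds u k).2
  omega

variable (hu0 : 0 < u) (hu1 : u ≤ 1)
include hu0 hu1

lemma cs_zero : cs u 0 = 1 := by
  unfold cs
  rw [Int.ceil_eq_iff]
  exact ⟨by push_cast; linarith, by push_cast; linarith⟩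

lemma partial_iot (n : ℕ) :
    ∑ k ∈ Finset.range n, (iot u k : ℝ) * w k = ((cs u n : ℝ) - 1) / 2^n := by
  induction n with
  | zero => simp [cs_zero u hu0 hu1]
  | succ n ih =>
      rw [Finset.sum_range_succ, ih]
      have hiot : (iot u n : ℝ) = (cs u (n+1) : ℝ) - 2 * (cs u n : ℝ) + 1 := by
        have := congrArg (fun z : ℤ => (z : ℝ)) (iot_cast u n)
        push_cast at this
        linarith
      have hw : w n = 1 / 2^(n+1) := by unfold w; rw [div_pow]; norm_num
      rw [hiot, hw]
      have h2 : (2:ℝ)^(n+1) = 2 * 2^n := by rw [pow_succ]; ring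
      field_simp
      ring

lemma cs_le (n : ℕ) : (2:ℝ)^n * u ≤ (cs u n : ℝ) := Int.le_ceil _

lemma cs_gt (n : ℕ) : (cs u n : ℝ) - 1 < (2:ℝ)^n * u := by
  unfold cs
  linarith [Int.ceil_lt_add_one ((2:ℝ)^n * u)]

lemma hasSum_iot : HasSum (fun k => (iot u k : ℝ) * w k) u := by
  rw [hasSum_iff_tendsto_nat_of_nonneg
    (fun i => mul_nonneg (Nat.cast_nonneg _) (w_nonneg i))]
  have hup : ∀ n, ∑ k ∈ Finset.range n, (iot u k : ℝ) * w k ≤ u := by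
    intro n
    rw [partial_iot u hu0 hu1 n]
    rw [div_le_iff₀ (by positivity)]
    have := cs_gt u hu0 hu1 n
    nlinarith
  have hlow : ∀ n, u - (1/2)^n ≤ ∑ k ∈ Finset.range n, (iot u k : ℝ) * w k := by
    intro n
    rw [partial_iot u hu0 hu1 n]
    rw [le_div_iff₀ (by positivity : (0:ℝ) < 2^n)]
    have h1 := cs_le u hu0 hu1 n
    have h2 : ((1:ℝ)/2)^n * 2^n = 1 := by
      rw [← mul_pow]; norm_num
    nlinarith
  have htend : Tendsto (fun n : ℕ => u - (1/2:ℝ)^n) atTop (nhds u) := by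
    have := tendsto_pow_atTop_nhds_zero_of_lt_one (by norm_num : (0:ℝ) ≤ 1/2)
      (by norm_num : (1/2:ℝ) < 1)
    simpa using tendsto_const_nhds.sub this
  exact tendsto_of_tendsto_of_tendsto_of_le_of_le htend tendsto_const_nhds hlow hup

lemma iot_infinite : {k | iot u k ≠ 0}.Infinite := by
  by_contra hfin
  rw [Set.not_infinite] at hfin
  obtain ⟨K, hK⟩ := hfin.bddAbove
  have hzero : ∀ k, K < k → iot u k = 0 := by
    intro k hk
    by_contra hne
    exact absurd (hK (show k ∈ {k | iot u k ≠ 0} from hne)) (by omega)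
  set M := K + 1 with hM
  have hrec : ∀ j : ℕ, cs u (M + j) - 1 = 2^j * (cs u M - 1) := by
    intro j
    induction j with
    | zero => simp
    | succ j ih =>
        have h0 : iot u (M + j) = 0 := hzero _ (by omega)
        have h1 := iot_cast u (M + j)
        have h2 : cs u (M + j + 1) - 1 = 2 * (cs u (M + j) - 1) := by omega
        rw [show M + (j+1) = M + j + 1 from rfl, h2, ih, pow_succ]
        ring
  have hd : (0:ℝ) < (2:ℝ)^M * u - ((cs u M : ℝ) - 1) := by
    linarith [cs_gt u hu0 hu1 M]
  set d : ℝ := (2:ℝ)^M * u - ((cs u M : ℝ) - 1) with hdd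
  obtain ⟨j, hj⟩ := pow_unbounded_of_one_lt (1/d) (by norm_num : (1:ℝ) < 2)
  have h1 : (2:ℝ)^(M+j) * u ≤ (cs u (M+j) : ℝ) := cs_le u hu0 hu1 (M+j)
  have h2 : (cs u (M+j) : ℝ) = (2:ℝ)^j * ((cs u M : ℝ) - 1) + 1 := by
    have := congrArg (fun z : ℤ => (z:ℝ)) (hrec j)
    push_cast at this
    linarith
  have hpow : (2:ℝ)^(M+j) = (2:ℝ)^M * 2^j := pow_add 2 M j
  have hle1 : (2:ℝ)^j * d ≤ 1 := by
    rw [hpow] at h1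
    rw [h2] at h1
    nlinarith
  have hgt1 : (1:ℝ) < (2:ℝ)^j * d := by
    rw [div_lt_iff₀ hd] at hj
    linarith
  linarith

end Ceil

/-- fine part -/
def jj (x : ℝ) : ℝ := ∑' k, if sg x (k+2) = 0 then 0 else w k

/-- the magic function -/
def Phi (x : ℝ) : ℝ := (-1 : ℝ)^(sg x 0) * ((sg x 1 : ℝ) + jj x - 1)

lemma no_inj_to_rat : ¬ ∃ f : (ℕ → Bool) → ℚ, Function.Injective f := by
  rintro ⟨f, hf⟩
  have hc1 : Countable (ℕ → Bool) := hf.countable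
  have e : Set ℕ ≃ (ℕ → Bool) := Equiv.arrowCongr (Equiv.refl ℕ) Equiv.propEquivBool
  have hc2 : Countable (Set ℕ) := Countable.of_equiv _ e.symm
  obtain ⟨g, hg⟩ := (countable_iff_exists_injective (Set ℕ)).mp hc2
  exact Function.cantor_injective g hg

lemma surjPhi (r : ℝ) : ∃ z : ℝ, Irrational z ∧ 0 < z ∧ z < 1 ∧ Phi z = r := by
  set t : ℝ := |r| + 1 with hT
  have ht1 : 1 ≤ t := by have := abs_nonneg r; linarith
  have hceil1 : 1 ≤ ⌈t⌉ := by
    have : (1:ℝ) ≤ (⌈t⌉ : ℝ) := le_trans ht1 (Int.le_ceil t)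
    exact_mod_cast this
  set n1 : ℕ := (⌈t⌉ - 1).toNat with hn1def
  have hn1 : (n1 : ℝ) = (⌈t⌉ : ℝ) - 1 := by
    have h0 : ((⌈t⌉ - 1).toNat : ℤ) = ⌈t⌉ - 1 := Int.toNat_of_nonneg (by omega)
    have h1 : ((n1 : ℤ) : ℝ) = ((⌈t⌉ - 1 : ℤ) : ℝ) := by rw [hn1def, h0]
    push_cast at h1
    linarith
  set u : ℝ := t - n1 with hu
  have hu0 : 0 < u := by
    have := Int.ceil_lt_add_one t
    rw [hu, hn1]
    linarith
  have hu1 : u ≤ 1 := by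
    have := Int.le_ceil t
    rw [hu, hn1]
    linarith
  set e : ℕ := if 0 ≤ r then 0 else 1 with he
  set Q : ℕ → Prop := fun k => iot u k ≠ 0 with hQdef
  have hQ : (setOf Q).Infinite := iot_infinite u hu0 hu1
  set sb : (ℕ → Bool) → ℕ → ℕ := fun β j =>
    match j with
    | 0 => e
    | 1 => n1
    | (k+2) => if iot u k = 0 then 0 else 1 + (if β (Nat.count Q k) then 1 else 0)
    with hsb
  have hinj : Function.Injective (fun β => zr (sb β)) := by
    intro β β' hzz
    simp only at hzz
    have h1 : sb β = sb β' := by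
      funext j
      rw [← sg_zr (sb β) j, ← sg_zr (sb β') j, hzz]
    funext i
    set k := Nat.nth Q i with hk
    have hQk : Q k := Nat.nth_mem_of_infinite hQ i
    have hcnt : Nat.count Q k = i := Nat.count_nth_of_infinite hQ i
    have h2 := congrFun h1 (k+2)
    have hne : ¬ (iot u k = 0) := hQk
    simp only [hsb, if_neg hne, hcnt] at h2
    by_cases hb : β i <;> by_cases hb' : β' i <;> simp [hb, hb'] at h2 ⊢
  have hexirr : ∃ β, Irrational (zr (sb β)) := by
    by_contra hall
    push_neg at hall
    have hrat : ∀ β, ∃ q : ℚ, (q : ℝ) = zr (sb β) := by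
      intro β
      have := not_not.mp (hall β)
      exact ⟨this.choose, this.choose_spec⟩
    choose q hq using hrat
    apply no_inj_to_rat
    refine ⟨q, fun a b hab => hinj ?_⟩
    simp only
    rw [← hq a, ← hq b, hab]
  obtain ⟨β, hβ⟩ := hexirr
  refine ⟨zr (sb β), hβ, ?_, zr_lt_one _, ?_⟩
  · apply zr_pos
    obtain ⟨k, hk⟩ := hQ.nonempty
    refine ⟨k + 1, ?_⟩
    show sb β (k+2) ≠ 0
    have hne : ¬ (iot u k = 0) := hk
    simp [hsb, if_neg hne]
  · unfold Phi
    rw [sg_zr, sg_zr]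
    have hjj : jj (zr (sb β)) = u := by
      unfold jj
      rw [tsum_congr (fun k => by rw [sg_zr (sb β) (k+2)])]
      have hpt : ∀ k, (if sb β (k+2) = 0 then (0:ℝ) else w k) = (iot u k : ℝ) * w k := by
        intro k
        by_cases h : iot u k = 0
        · simp [hsb, h]
        · have h1 : iot u k = 1 := by have := iot_le_one u k; omega
          rw [h1]
          push_cast
          rw [one_mul, if_neg]
          simp [hsb, if_neg h]
      rw [tsum_congr hpt, (hasSum_iot u hu0 hu1).tsum_eq]
    rw [hjj]
    show (-1:ℝ)^(sb β 0) * ((sb β 1 : ℝ) + u - 1) = r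
    have hv : ((sb β 1 : ℕ) : ℝ) + u - 1 = |r| := by
      show (n1 : ℝ) + u - 1 = |r|
      rw [hu, hT]
      ring
    rw [hv]
    show (-1:ℝ)^e * |r| = r
    by_cases hr : 0 ≤ r
    · rw [he, if_pos hr, pow_zero, one_mul, abs_of_nonneg hr]
    · rw [he, if_neg hr, pow_one, abs_of_neg (lt_of_not_ge hr)]
      ring

section Topology

lemma irr_pow_mul {x : ℝ} (hx : Irrational x) (N : ℕ) : Irrational ((2:ℝ)^N * x) := by
  have h : ((2^N : ℕ) : ℝ) = (2:ℝ)^N := by push_cast; ring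
  rw [← h]
  exact irrational_natCast_mul_iff.mpr ⟨by positivity, hx⟩

lemma irr_aff {x : ℝ} (hx : Irrational x) (N : ℕ) (m : ℤ) :
    Irrational ((2:ℝ)^N * x - m) :=
  irrational_sub_intCast_iff.mpr (irr_pow_mul hx N)

lemma ev_floor {x : ℝ} (hx : Irrational x) (N : ℕ) :
    ∀ᶠ y in nhds x, ⌊(2:ℝ)^N * y⌋ = ⌊(2:ℝ)^N * x⌋ := by
  set m := ⌊(2:ℝ)^N * x⌋ with hm
  have hirr : Irrational ((2:ℝ)^N * x) := irr_pow_mul hx N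
  have hp : (0:ℝ) < 2^N := by positivity
  have h1 : (m:ℝ) < 2^N * x := lt_of_le_of_ne (Int.floor_le _) (Ne.symm (hirr.ne_int m))
  have h2 : (2:ℝ)^N * x < m + 1 := Int.lt_floor_add_one _
  have hmem : x ∈ Set.Ioo ((m:ℝ)/2^N) ((m+1:ℝ)/2^N) := by
    constructor
    · rw [div_lt_iff₀ hp]; linarith
    · rw [lt_div_iff₀ hp]; push_cast; linarith
  filter_upwards [isOpen_Ioo.mem_nhds hmem] with y hy
  obtain ⟨hy1, hy2⟩ := hy
  rw [div_lt_iff₀ hp] at hy1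
  rw [lt_div_iff₀ hp] at hy2
  push_cast at hy2
  rw [Int.floor_eq_iff]
  constructor
  · linarith
  · push_cast; linarith

lemma floor_pow_det (t : ℝ) {n N : ℕ} (h : n ≤ N) :
    ⌊(2:ℝ)^n * t⌋ = ⌊((⌊(2:ℝ)^N * t⌋ : ℝ)) / 2^(N-n)⌋ := by
  set M := ⌊(2:ℝ)^N * t⌋ with hM
  set q := ⌊(M:ℝ) / 2^(N-n)⌋ with hq
  have hD : (0:ℝ) < 2^(N-n) := by positivity
  have hsplit : (2:ℝ)^N = 2^n * 2^(N-n) := by rw [← pow_add]; congr 1; omega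
  have hf1 : (M:ℝ) ≤ 2^N * t := Int.floor_le _
  have hf2 : (2:ℝ)^N * t < M + 1 := Int.lt_floor_add_one _
  have hq1 : (q:ℝ) ≤ (M:ℝ)/2^(N-n) := Int.floor_le _
  have hq2 : (M:ℝ)/2^(N-n) < q + 1 := Int.lt_floor_add_one _
  have hA : (q:ℝ) * 2^(N-n) ≤ M := by rw [← le_div_iff₀ hD]; exact hq1
  have hB : (M:ℝ) < ((q:ℝ)+1) * 2^(N-n) := by
    rw [div_lt_iff₀ hD] at hq2
    linarith
  have hBint : M + 1 ≤ (q+1) * 2^(N-n) := by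
    have : (M:ℝ) < (((q+1) * 2^(N-n) : ℤ) : ℝ) := by push_cast; linarith
    exact_mod_cast this
  have hBr : (M:ℝ) + 1 ≤ ((q:ℝ)+1) * 2^(N-n) := by
    have : ((M + 1 : ℤ) : ℝ) ≤ (((q+1) * 2^(N-n) : ℤ) : ℝ) := by exact_mod_cast hBint
    push_cast at this
    linarith
  rw [Int.floor_eq_iff]
  constructor
  · have h5 : (q:ℝ) * 2^(N-n) ≤ 2^n * t * 2^(N-n) := by
      rw [hsplit] at hf1
      nlinarith
    have := le_of_mul_le_mul_right h5 hD
    linarith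
  · have h3 : (2:ℝ)^n * t * 2^(N-n) < ((q:ℝ)+1) * 2^(N-n) := by
      rw [hsplit] at hf2
      nlinarith
    have := lt_of_mul_lt_mul_right h3 hD.le
    push_cast
    linarith

lemma dg_det {x y : ℝ} {N : ℕ} (hf : ⌊(2:ℝ)^N * y⌋ = ⌊(2:ℝ)^N * x⌋) :
    ∀ n, n + 1 ≤ N → dg n y = dg n x := by
  intro n hn
  unfold dg
  rw [floor_pow_det y (show n+1 ≤ N from hn), floor_pow_det y (show n ≤ N by omega),
      floor_pow_det x (show n+1 ≤ N from hn), floor_pow_det x (show n ≤ N by omega), hf]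

lemma ev_sg {x : ℝ} (hx : Irrational x) (K : ℕ) :
    ∀ᶠ y in nhds x, ∀ j, j ≤ K → sg y j = sg x j := by
  filter_upwards [ev_floor hx (ps x K + 2)] with y hy
  have hd : ∀ n, n < ps x K + 1 → dg n y = dg n x := by
    intro n hn
    exact dg_det hy n (by omega)
  exact sg_congr hd (by omega)

abbrev PP : Type := {x : ℝ // Irrational x}

lemma ev_subtype {x : PP} {p : ℝ → Prop} (h : ∀ᶠ y in nhds x.val, p y) :
    ∀ᶠ z : PP in nhds x, p z.val :=
  (continuous_subtype_val.continuousAt : Filter.Tendsto _ (nhds x) (nhds x.val)).eventually h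

lemma cont_sg_real (k : ℕ) (g : ℕ → ℝ) :
    Continuous (fun z : PP => g (sg z.val k)) := by
  rw [continuous_iff_continuousAt]
  intro z
  have hev : ∀ᶠ y : PP in nhds z, sg y.val k = sg z.val k :=
    ev_subtype ((ev_sg z.2 k).mono (fun y hy => hy k le_rfl))
  apply ContinuousAt.congr (continuousAt_const : ContinuousAt (fun _ : PP => g (sg z.val k)) z)
  filter_upwards [hev] with y hy
  rw [hy]

lemma cont_jjP : Continuous (fun z : PP => jj z.val) := by
  simp only [jj]
  apply continuous_tsum
    (f := fun k (z : PP) => if sg z.val (k+2) = 0 then (0:ℝ) else w k) (u := w)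
  · intro k
    exact cont_sg_real (k+2) (fun n => if n = 0 then (0:ℝ) else w k)
  · exact summable_w
  · intro n z
    rw [Real.norm_eq_abs]
    split
    · rw [abs_zero]; exact w_nonneg n
    · rw [abs_of_nonneg (w_nonneg n)]

lemma cont_PhiP : Continuous (fun z : PP => Phi z.val) := by
  simp only [Phi]
  exact (cont_sg_real 0 (fun n => (-1:ℝ)^n)).mul
    (((cont_sg_real 1 (fun n => (n:ℝ))).add cont_jjP).sub continuous_const)

def ddf (N : ℕ) (s : Finset ℤ) (x : ℝ) : ℝ :=
  ∑ m ∈ s, if ⌊(2:ℝ)^N * x⌋ = m then Phi ((2:ℝ)^N * x - m) else 0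

def TT (N : ℕ) (m : ℤ) (z : PP) : PP := ⟨(2:ℝ)^N * z.val - m, irr_aff z.2 N m⟩

lemma cont_TT (N : ℕ) (m : ℤ) : Continuous (TT N m) :=
  Continuous.subtype_mk ((continuous_const.mul continuous_subtype_val).sub continuous_const) _

lemma cont_term (N : ℕ) (m : ℤ) :
    Continuous (fun z : PP => if ⌊(2:ℝ)^N * z.val⌋ = m then Phi ((2:ℝ)^N * z.val - m) else 0) := by
  rw [continuous_iff_continuousAt]
  intro z
  have hev : ∀ᶠ y : PP in nhds z, ⌊(2:ℝ)^N * y.val⌋ = ⌊(2:ℝ)^N * z.val⌋ :=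
    ev_subtype (ev_floor z.2 N)
  by_cases h : ⌊(2:ℝ)^N * z.val⌋ = m
  · have hc : ContinuousAt (fun y : PP => Phi ((2:ℝ)^N * y.val - m)) z :=
      (cont_PhiP.comp (cont_TT N m)).continuousAt
    apply hc.congr
    filter_upwards [hev] with y hy
    rw [if_pos (hy.trans h)]
  · apply (continuousAt_const : ContinuousAt (fun _ : PP => (0:ℝ)) z).congr
    filter_upwards [hev] with y hy
    rw [if_neg (by rw [hy]; exact h)]

lemma cont_ddf (N : ℕ) (s : Finset ℤ) : Continuous (fun z : PP => ddf N s z.val) := by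
  simp only [ddf]
  exact continuous_finset_sum s (fun m _ => cont_term N m)

def ddC (N : ℕ) (s : Finset ℤ) : C(PP, ℝ) := ⟨fun z => ddf N s z.val, cont_ddf N s⟩

lemma ddf_eval {N : ℕ} {s : Finset ℤ} {m : ℤ} (hm : m ∈ s) {y : ℝ}
    (hy : ⌊(2:ℝ)^N * y⌋ = m) : ddf N s y = Phi ((2:ℝ)^N * y - m) := by
  unfold ddf
  rw [Finset.sum_eq_single m]
  · rw [if_pos hy]
  · intro b _ hb
    rw [if_neg (by rw [hy]; exact fun hc => hb hc.symm)]
  · intro hns; exact absurd hm hns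

lemma keyLemma {F : Set (Set C(PP, ℝ))}
    (hFsub : F ⊆ {S | ∃ (V : Set PP) (r : ℝ), IsOpen V ∧ S = {f : C(PP, ℝ) | ∃ x ∈ V, f x = r}})
    (g : C(PP,ℝ)) (hg : g ∈ ⋂₀ F) :
    ∀ o ∈ F, ∃ (N0 : ℕ) (ξ : ℝ), ∀ N, N0 ≤ N → ∀ s : Finset ℤ,
      ⌊(2:ℝ)^N * ξ⌋ ∈ s → (ddC N s) ∈ o := by
  intro o ho
  obtain ⟨V, r, hVopen, hoeq⟩ := hFsub ho
  subst hoeq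
  obtain ⟨x0, hx0V, -⟩ := Set.mem_sInter.mp hg _ ho
  obtain ⟨U, hUopen, hUV⟩ := isOpen_induced_iff.mp hVopen
  have hx0U : x0.val ∈ U := by rw [← hUV] at hx0V; exact hx0V
  obtain ⟨ε, hε, hball⟩ := Metric.isOpen_iff.mp hUopen _ hx0U
  obtain ⟨N0, hN0⟩ := exists_pow_lt_of_lt_one hε (by norm_num : (1:ℝ)/2 < 1)
  refine ⟨N0, x0.val, ?_⟩
  intro N hN s hms
  obtain ⟨z, hzirr, hz0, hz1, hPhi⟩ := surjPhi r
  set m : ℤ := ⌊(2:ℝ)^N * x0.val⌋ with hm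
  set y : ℝ := (z + m) / 2^N with hy
  have hpN : (0:ℝ) < 2^N := by positivity
  have h2Ny : (2:ℝ)^N * y = z + m := by rw [hy]; field_simp
  have hyirr : Irrational y := by
    have h1 : Irrational (z + (m:ℝ)) := irrational_add_intCast_iff.mpr hzirr
    have h2 : y = (z + (m:ℝ)) / ((2^N : ℕ) : ℝ) := by rw [hy]; push_cast; ring_nf
    rw [h2]
    exact irrational_div_natCast_iff.mpr ⟨by positivity, h1⟩
  have hfl : ⌊(2:ℝ)^N * y⌋ = m := by
    rw [h2Ny, Int.floor_add_intCast, Int.floor_eq_zero_iff.mpr ⟨hz0.le, hz1⟩]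
    ring
  have hb1 : (m:ℝ) ≤ 2^N * x0.val := Int.floor_le _
  have hb2 : (2:ℝ)^N * x0.val < m + 1 := Int.lt_floor_add_one _
  have hb3 : (m:ℝ) < 2^N * y := by rw [h2Ny]; linarith
  have hb4 : (2:ℝ)^N * y < m + 1 := by rw [h2Ny]; linarith
  have hyU : y ∈ U := by
    apply hball
    rw [Metric.mem_ball, Real.dist_eq]
    have hlt : |(2:ℝ)^N * y - 2^N * x0.val| < 1 := by
      rw [abs_lt]
      constructor <;> linarith
    have heq : (2:ℝ)^N * y - 2^N * x0.val = (y - x0.val) * 2^N := by ring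
    rw [heq, abs_mul, abs_of_pos hpN] at hlt
    have h7 : |y - x0.val| < (1/2:ℝ)^N := by
      have hinv : ((1:ℝ)/2)^N = 1 / 2^N := by rw [div_pow]; norm_num
      rw [hinv, lt_div_iff₀ hpN]
      linarith
    have h8 : ((1:ℝ)/2)^N ≤ (1/2:ℝ)^N0 :=
      pow_le_pow_of_le_one (by norm_num) (by norm_num) hN
    linarith
  refine ⟨⟨y, hyirr⟩, ?_, ?_⟩
  · rw [← hUV]; exact hyU
  · show ddf N s y = r
    rw [ddf_eval hms hfl, h2Ny, show z + (m:ℝ) - m = z by ring]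
    exact hPhi

end Topology

end
end St18

/-- `C_h(ℙ)` is separable, where `ℙ` is the space of irrational numbers. -/
theorem stmt18 :
    @SeparableSpace C({x : ℝ // Irrational x}, ℝ)
      (openPointTopology {x : ℝ // Irrational x}) := by
  letI topI : TopologicalSpace C(St18.PP, ℝ) := openPointTopology St18.PP
  refine @SeparableSpace.mk _ _ ⟨Set.range (fun q : ℕ × Finset ℤ => St18.ddC q.1 q.2),
    Set.countable_range _, ?_⟩
  have hB := TopologicalSpace.isTopologicalBasis_of_subbasis
    (t := topI)
    (s := {S | ∃ (V : Set St18.PP) (r : ℝ), IsOpen V ∧ S = {f : C(St18.PP, ℝ) | ∃ x ∈ V, f x = r}})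
    rfl
  rw [hB.dense_iff]
  rintro o ⟨F, ⟨hFfin, hFsub⟩, rfl⟩ hne
  obtain ⟨g, hg⟩ := hne
  have key := St18.keyLemma hFsub g hg
  have key' : ∀ o' : Set C(St18.PP, ℝ), ∃ (N0 : ℕ) (ξ : ℝ), o' ∈ F →
      ∀ N, N0 ≤ N → ∀ s : Finset ℤ, ⌊(2:ℝ)^N * ξ⌋ ∈ s → (St18.ddC N s) ∈ o' := by
    intro o'
    by_cases h : o' ∈ F
    · obtain ⟨N0, ξ, h2⟩ := key o' h
      exact ⟨N0, ξ, fun _ => h2⟩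
    · exact ⟨0, 0, fun hc => absurd hc h⟩
  choose N0 ξ hkey using key'
  classical
  set N := hFfin.toFinset.sup N0 with hNdef
  set s : Finset ℤ := hFfin.toFinset.image (fun o' => ⌊(2:ℝ)^N * ξ o'⌋) with hsdef
  refine ⟨St18.ddC N s, Set.mem_sInter.mpr ?_, ⟨(N, s), rfl⟩⟩
  intro o' ho'
  have hmem : o' ∈ hFfin.toFinset := hFfin.mem_toFinset.mpr ho'
  exact hkey o' ho' N (Finset.le_sup hmem) s (Finset.mem_image_of_mem _ hmem)
end

section
/- Let X be a topological space. If C_h(X) is separable, then X has a π-network consisting of 𝓘-sets. -/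
open TopologicalSpace Set Topology

section AuxStmt19
open Filter

/-- `cantorFunction c` is continuous for `0 ≤ c < 1`. -/
lemma cantorFunction_continuous {c : ℝ} (h0 : 0 ≤ c) (h1 : c < 1) :
    Continuous (Cardinal.cantorFunction c) := by
  have : Continuous fun (τ : ℕ → Bool) => ∑' n, Cardinal.cantorFunctionAux c τ n := by
    apply continuous_tsum (u := fun n => c ^ n)
    · intro i
      exact (continuous_of_discreteTopology
        (f := fun b : Bool => cond b (c ^ i) (0 : ℝ))).comp (continuous_apply i)
    · exact summable_geometric_of_lt_one h0 h1
    · intro n τ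
      rcases h : τ n with _ | _
      · simp [Cardinal.cantorFunctionAux, h, pow_nonneg h0 n]
      · simp [Cardinal.cantorFunctionAux, h, Real.norm_eq_abs, abs_of_nonneg h0,
          abs_of_nonneg (pow_nonneg h0 n)]
  exact this

/-- Every `y ∈ [0,1)` is a value of `cantorFunction (1/2)` (binary expansion). -/
lemma exists_cantorFunction_half_eq {y : ℝ} (h0 : 0 ≤ y) (h1 : y < 1) :
    ∃ τ : ℕ → Bool, Cardinal.cantorFunction (1/2) τ = y := by
  classical
  have hfl : ∀ j : ℕ, ⌊y * 2^(j+1)⌋ = 2 * ⌊y * 2^j⌋ ∨ ⌊y * 2^(j+1)⌋ = 2 * ⌊y * 2^j⌋ + 1 := by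
    intro j
    have h2 : y * 2^(j+1) = 2 * (y * 2^j) := by ring
    have hle : 2 * ⌊y * 2^j⌋ ≤ ⌊y * 2^(j+1)⌋ := by
      rw [h2]
      refine Int.le_floor.mpr ?_
      push_cast
      linarith [Int.floor_le (y * 2^j)]
    have hlt : ⌊y * 2^(j+1)⌋ < 2 * ⌊y * 2^j⌋ + 2 := by
      rw [h2]
      refine Int.floor_lt.mpr ?_
      push_cast
      linarith [Int.lt_floor_add_one (y * 2^j)]
    omega
  let τ : ℕ → Bool := fun n => match n with
    | 0 => false
    | (j+1) => decide (⌊y * 2^(j+1)⌋ = 2 * ⌊y * 2^j⌋ + 1)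
  have hsum : Summable (Cardinal.cantorFunctionAux (1/2) τ) :=
    Cardinal.summable_cantor_function τ (by norm_num) (by norm_num)
  have hpart : ∀ k : ℕ, (∑ i ∈ Finset.range (k+1), Cardinal.cantorFunctionAux (1/2) τ i)
      = (⌊y * 2^k⌋ : ℝ) / 2^k := by
    intro k
    induction k with
    | zero =>
      have hy0 : ⌊y⌋ = 0 := Int.floor_eq_zero_iff.mpr ⟨h0, h1⟩
      simp [Finset.sum_range_one, Cardinal.cantorFunctionAux, hy0, τ]
    | succ k ih =>
      rw [Finset.sum_range_succ, ih]
      rcases hfl k with hk | hk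
      · have hτ : τ (k+1) = false := by
          simp only [τ, decide_eq_false_iff_not]
          omega
        rw [Cardinal.cantorFunctionAux_false hτ, hk]
        push_cast
        field_simp
        ring
      · have hτ : τ (k+1) = true := by
          simp only [τ, decide_eq_true_eq]
          exact hk
        rw [Cardinal.cantorFunctionAux_true hτ, hk]
        push_cast
        field_simp
        have hh : ((1:ℝ)/2)^k * 2^(k*2) = 2^k := by
          rw [mul_comm k 2, pow_mul, ← mul_pow]; norm_num
        linear_combination hh
  have hlow : ∀ k : ℕ, y - (1/2)^k ≤ (⌊y * 2^k⌋ : ℝ) / 2^k := by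
    intro k
    have h2k : (0:ℝ) < 2^k := by positivity
    rw [le_div_iff₀ h2k]
    have hhalf : ((1:ℝ)/2)^k * 2^k = 1 := by
      rw [← mul_pow]; norm_num
    nlinarith [Int.lt_floor_add_one (y * 2^k)]
  have hup : ∀ k : ℕ, (⌊y * 2^k⌋ : ℝ) / 2^k ≤ y := by
    intro k
    have h2k : (0:ℝ) < 2^k := by positivity
    rw [div_le_iff₀ h2k]
    exact Int.floor_le (y * 2^k)
  have hlim : Tendsto (fun k : ℕ => (⌊y * 2^k⌋ : ℝ) / 2^k) atTop (nhds y) := by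
    have hg : Tendsto (fun k : ℕ => y - (1/2:ℝ)^k) atTop (nhds y) := by
      have := tendsto_const_nhds (x := y) (f := atTop (α := ℕ)) |>.sub
        (tendsto_pow_atTop_nhds_zero_of_lt_one (r := (1/2:ℝ)) (by norm_num) (by norm_num))
      simpa using this
    exact tendsto_of_tendsto_of_tendsto_of_le_of_le hg tendsto_const_nhds hlow hup
  have hts : Tendsto (fun k : ℕ => ∑ i ∈ Finset.range (k+1), Cardinal.cantorFunctionAux (1/2) τ i)
      atTop (nhds (Cardinal.cantorFunction (1/2) τ)) := by
    have h1' := hsum.hasSum.tendsto_sum_nat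
    exact h1'.comp (tendsto_add_atTop_nat 1)
  have hts' : Tendsto (fun k : ℕ => ∑ i ∈ Finset.range (k+1), Cardinal.cantorFunctionAux (1/2) τ i)
      atTop (nhds y) := hlim.congr (fun k => (hpart k).symm)
  exact ⟨τ, tendsto_nhds_unique hts hts'⟩

end AuxStmt19

/-- If `C_h(X)` is separable, then `X` has a π-network consisting of 𝓘-sets. -/
theorem stmt19 {X : Type*} [TopologicalSpace X]
    (hsep : @SeparableSpace C(X, ℝ) (openPointTopology X)) :
    ∃ γ : Set (Set X), IsPiNetwork γ ∧ ∀ A ∈ γ, IsISet A := by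
  classical
  obtain ⟨s, hs_cnt, hs_dense⟩ := hsep.1
  have hne : s.Nonempty := by
    rcases s.eq_empty_or_nonempty with h | h
    · exfalso
      rw [h] at hs_dense
      have h2 := hs_dense (ContinuousMap.const X 0)
      rw [@closure_empty _ (openPointTopology X)] at h2
      exact h2
    · exact h
  obtain ⟨f, hf⟩ := hs_cnt.exists_eq_range hne
  -- density consequence: every value is attained on every nonempty open set by some `f n`
  have key : ∀ (U : Set X), IsOpen U → U.Nonempty → ∀ r : ℝ, ∃ n : ℕ, ∃ x ∈ U, f n x = r := by
    intro U hU hUne r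
    obtain ⟨x₀, hx₀⟩ := hUne
    have hO : IsOpen[openPointTopology X] {g : C(X, ℝ) | ∃ x ∈ U, g x = r} :=
      TopologicalSpace.isOpen_generateFrom_of_mem ⟨U, r, hU, rfl⟩
    have hone : {g : C(X, ℝ) | ∃ x ∈ U, g x = r}.Nonempty :=
      ⟨ContinuousMap.const X r, x₀, hx₀, rfl⟩
    obtain ⟨g, hgs, hgO⟩ := @Dense.exists_mem_open _ (openPointTopology X) _ hs_dense _ hO hone
    rw [hf] at hgs
    obtain ⟨n, rfl⟩ := hgs
    exact ⟨n, hgO⟩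
  -- the Cantor-type embedding of (ℕ → ℕ → Bool) into ℝ
  set E : (ℕ → ℕ → Bool) → ℝ :=
    fun σ => Cardinal.cantorFunction (1/3) (fun m => σ m.unpair.1 m.unpair.2) with hE_def
  have hEcont : Continuous E := by
    apply (cantorFunction_continuous (by norm_num) (by norm_num)).comp
    exact continuous_pi fun m => (continuous_apply m.unpair.2).comp (continuous_apply m.unpair.1)
  have hEinj : Function.Injective E := by
    intro σ σ' h
    have h2 := Cardinal.cantorFunction_injective (by norm_num) (by norm_num) h
    funext i j
    have := congrFun h2 (Nat.pair i j)
    simpa [Nat.unpair_pair] using this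
  refine ⟨{A : Set X | IsISet A}, ⟨?_, ?_⟩, fun A hA => hA⟩
  · rintro A ⟨g, a, b, hg, hab, hsub⟩
    obtain ⟨x, hx, -⟩ := hsub (show a ∈ Icc a b from ⟨le_refl a, hab.le⟩)
    exact ⟨x, hx⟩
  · intro U hU hUne
    refine ⟨U, ?_, subset_rfl⟩
    show IsISet U
    by_cases hfull : ∃ n : ℕ, ∀ τ : ℕ → Bool,
        ∃ x ∈ U, ∃ σ : ℕ → ℕ → Bool, σ n = τ ∧ f n x = E σ
    · obtain ⟨n, hn⟩ := hfull
      obtain ⟨Φ, hΦ⟩ := ContinuousMap.exists_extension'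
        (hEcont.isClosedEmbedding hEinj)
        (⟨fun σ : ℕ → ℕ → Bool => Cardinal.cantorFunction (1/2) (σ n),
          (cantorFunction_continuous (by norm_num) (by norm_num)).comp
            (continuous_apply n)⟩ : C(ℕ → ℕ → Bool, ℝ))
      refine ⟨fun x => Φ (f n x), 0, 1/2,
        Φ.continuous.comp (f n).continuous, by norm_num, ?_⟩
      intro y hy
      obtain ⟨τ, hτ⟩ := exists_cantorFunction_half_eq hy.1
        (lt_of_le_of_lt hy.2 (by norm_num))
      obtain ⟨x, hxU, σ, hσn, hfx⟩ := hn τ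
      refine ⟨x, hxU, ?_⟩
      show Φ (f n x) = y
      rw [hfx]
      have h3 := congrFun hΦ σ
      simp only [Function.comp_apply, ContinuousMap.coe_mk] at h3
      rw [h3, hσn, hτ]
    · exfalso
      push_neg at hfull
      choose τ0 hτ0 using hfull
      obtain ⟨n, x, hxU, hfx⟩ := key U hU hUne (E τ0)
      exact hτ0 n x hxU τ0 rfl hfx
end
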